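/- arXiv:2401.08473 — 5 statements merged into one kernel-verified Lean document; each statement's English description precedes it below -/
import Mathlib

section
/- Let (K, d) be a compact metric space of diameter at most 1 and μ a d_h-Ahlfors regular Borel probability measure on K. Let G : K × K → ℝ be measurable with the two-sided bound C₁ d(x,y)^{s d_w - d_h} − C₂ ≤ G(x,y) ≤ C₃ d(x,y)^{s d_w - d_h} for all x ≠ y, where 0 < s < d_h/d_w and C₁, C₂, C₃ > 0. Then for p > 0 and x ∈ K, y ↦ G(x,y) belongs to L^p(K, μ) if and only if s > (p−1) d_h / (p d_w). -/
open MeasureTheory Metric Set ENNReal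

private lemma aux_cover {K : Type*} [MetricSpace K] {x y : K} (hxy : y ≠ x)
    (hd : dist y x ≤ 1) : ∃ n : ℕ, (1/2:ℝ)^(n+1) < dist y x ∧ dist y x ≤ (1/2:ℝ)^n := by
  have hdpos : 0 < dist y x := dist_pos.2 hxy
  have hhalf : (1/2:ℝ) < 1 := by norm_num
  obtain ⟨m, hm⟩ := exists_pow_lt_of_lt_one hdpos hhalf
  have hP : ∃ n, (1/2:ℝ)^n < dist y x := ⟨m, hm⟩
  classical
  have hfind : (1/2:ℝ)^(Nat.find hP) < dist y x := Nat.find_spec hP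
  have hn₀pos : Nat.find hP ≠ 0 := by
    intro h
    rw [h] at hfind
    simp at hfind
    linarith
  obtain ⟨n, hn⟩ := Nat.exists_eq_succ_of_ne_zero hn₀pos
  rw [hn] at hfind
  refine ⟨n, hfind, ?_⟩
  have := Nat.find_min hP (m := n) (by omega)
  linarith [not_lt.1 this]

private lemma aux_singleton {K : Type*} [MetricSpace K] [MeasurableSpace K]
    (μ : Measure K) (x : K) (C dh : ℝ) (hC : 0 < C) (hdh : 0 < dh)
    (hA : ∀ r : ℝ, r ∈ Set.Ioc (0:ℝ) 1 → μ (Metric.closedBall x r) ≤ ENNReal.ofReal (C * r ^ dh)) :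
    μ {x} = 0 := by
  have h2 : (0:ℝ) < 1/2 := by norm_num
  have key : ∀ n : ℕ, μ {x} ≤ ENNReal.ofReal (C * ((1/2:ℝ)^(n+1)) ^ dh) := by
    intro n
    refine le_trans (measure_mono ?_) (hA _ ⟨pow_pos h2 _, pow_le_one₀ h2.le (by norm_num)⟩)
    intro y hy
    simp only [mem_singleton_iff] at hy
    simp [hy, mem_closedBall, (pow_pos h2 (n+1)).le]
  have htend : Filter.Tendsto (fun n : ℕ => ENNReal.ofReal (C * ((1/2:ℝ)^(n+1)) ^ dh))
      Filter.atTop (nhds 0) := by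
    rw [show (0:ENNReal) = ENNReal.ofReal 0 by simp]
    apply ENNReal.tendsto_ofReal
    have : Filter.Tendsto (fun n : ℕ => ((1/2:ℝ)^(n+1)) ^ dh) Filter.atTop (nhds 0) := by
      have hb : Filter.Tendsto (fun n : ℕ => ((1/2:ℝ)^dh)^(n+1)) Filter.atTop (nhds 0) := by
        apply Filter.Tendsto.comp (tendsto_pow_atTop_nhds_zero_of_lt_one
          (Real.rpow_nonneg h2.le dh)
          (Real.rpow_lt_one h2.le (by norm_num) hdh))
        exact Filter.tendsto_add_atTop_nat 1
      convert hb using 2 with n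
      rw [← Real.rpow_natCast (1/2:ℝ) (n+1), ← Real.rpow_natCast ((1/2:ℝ)^dh) (n+1),
        ← Real.rpow_mul h2.le, mul_comm, Real.rpow_mul h2.le]
    simpa using this.const_mul C
  have := ge_of_tendsto' htend key
  simpa using this

private lemma aux_lt_top {K : Type*} [MetricSpace K] [MeasurableSpace K]
    [OpensMeasurableSpace K] (μ : Measure K) (x : K) (C dh β : ℝ)
    (hC : 0 < C) (hβ : 0 ≤ β) (hβdh : β < dh)
    (hd : ∀ y : K, dist y x ≤ 1)
    (hA : ∀ r : ℝ, r ∈ Set.Ioc (0:ℝ) 1 → μ (Metric.closedBall x r) ≤ ENNReal.ofReal (C * r ^ dh)) :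
    ∫⁻ y, ENNReal.ofReal (dist y x ^ (-β)) ∂μ < ⊤ := by
  have h2 : (0:ℝ) < 1/2 := by norm_num
  have hdh : 0 < dh := lt_of_le_of_lt hβ hβdh
  have hrmem : ∀ n : ℕ, ((1/2:ℝ)^n) ∈ Set.Ioc (0:ℝ) 1 :=
    fun n => ⟨pow_pos h2 _, pow_le_one₀ h2.le (by norm_num)⟩
  set A : ℕ → Set K := fun n =>
    Metric.closedBall x ((1/2:ℝ)^n) \ Metric.closedBall x ((1/2:ℝ)^(n+1)) with hA_def
  have hAm : ∀ n, MeasurableSet (A n) :=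
    fun n => measurableSet_closedBall.diff measurableSet_closedBall
  have hU : MeasurableSet (⋃ n, A n) := MeasurableSet.iUnion hAm
  rw [← lintegral_add_compl _ hU]
  have hcompl : μ ((⋃ n, A n)ᶜ) = 0 := by
    refine measure_mono_null ?_ (aux_singleton μ x C dh hC hdh hA)
    intro y hy
    simp only [mem_compl_iff, mem_iUnion, not_exists] at hy
    by_contra hyx
    simp only [mem_singleton_iff] at hyx
    obtain ⟨n, h1, h2'⟩ := aux_cover (x := x) hyx (hd y)
    exact hy n ⟨mem_closedBall.2 h2', fun hmem => absurd (mem_closedBall.1 hmem) (not_le.2 h1)⟩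
  rw [setLIntegral_measure_zero _ _ hcompl, add_zero]
  refine lt_of_le_of_lt (lintegral_iUnion_le A _) ?_
  -- per-term bound
  have hterm : ∀ n : ℕ, ∫⁻ y in A n, ENNReal.ofReal (dist y x ^ (-β)) ∂μ ≤
      ENNReal.ofReal (C * (1/2:ℝ) ^ (-β)) * (ENNReal.ofReal ((1/2:ℝ) ^ (dh - β))) ^ n := by
    intro n
    have hb1 : ∫⁻ y in A n, ENNReal.ofReal (dist y x ^ (-β)) ∂μ ≤
        ∫⁻ _ in A n, ENNReal.ofReal (((1/2:ℝ)^(n+1)) ^ (-β)) ∂μ := by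
      refine setLIntegral_mono measurable_const ?_
      intro y hy
      obtain ⟨_, hy2⟩ := hy
      simp only [mem_closedBall, not_le] at hy2
      exact ENNReal.ofReal_le_ofReal
        (Real.rpow_le_rpow_of_nonpos (pow_pos h2 _) hy2.le (neg_nonpos.2 hβ))
    rw [setLIntegral_const] at hb1
    have hb2 : μ (A n) ≤ ENNReal.ofReal (C * ((1/2:ℝ)^n) ^ dh) :=
      le_trans (measure_mono diff_subset) (hA _ (hrmem n))
    have hb3 : ∫⁻ y in A n, ENNReal.ofReal (dist y x ^ (-β)) ∂μ ≤
        ENNReal.ofReal (((1/2:ℝ)^(n+1)) ^ (-β)) * ENNReal.ofReal (C * ((1/2:ℝ)^n) ^ dh) :=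
      le_trans hb1 (mul_le_mul_right hb2 _)
    refine le_trans hb3 (le_of_eq ?_)
    rw [← ENNReal.ofReal_mul (Real.rpow_nonneg (pow_pos h2 _).le _),
      ← ENNReal.ofReal_pow (Real.rpow_nonneg h2.le _),
      ← ENNReal.ofReal_mul (by positivity)]
    congr 1
    rw [← Real.rpow_natCast (1/2:ℝ) (n+1), ← Real.rpow_natCast (1/2:ℝ) n,
      ← Real.rpow_mul h2.le, ← Real.rpow_mul h2.le,
      ← Real.rpow_natCast ((1/2:ℝ)^(dh-β)) n, ← Real.rpow_mul h2.le]
    push_cast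
    rw [show ((n:ℝ)+1) * -β = -β + (n:ℝ)*(-β) by ring]
    rw [Real.rpow_add h2, show (dh - β) * (n:ℝ) = (n:ℝ)*dh + (n:ℝ)*(-β) by ring,
      Real.rpow_add h2]
    push_cast
    ring
  refine lt_of_le_of_lt (ENNReal.tsum_le_tsum hterm) ?_
  rw [ENNReal.tsum_mul_left, ENNReal.tsum_geometric]
  have hq : ENNReal.ofReal ((1/2:ℝ) ^ (dh - β)) < 1 := by
    rw [show (1:ℝ≥0∞) = ENNReal.ofReal 1 by simp]
    refine (ENNReal.ofReal_lt_ofReal_iff_of_nonneg (Real.rpow_nonneg h2.le _)).2 ?_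
    exact Real.rpow_lt_one h2.le (by norm_num) (by linarith)
  exact ENNReal.mul_lt_top ENNReal.ofReal_lt_top
    (ENNReal.inv_lt_top.2 (tsub_pos_of_lt hq))

private lemma aux_eq_top {K : Type*} [MetricSpace K] [MeasurableSpace K]
    [OpensMeasurableSpace K] (μ : Measure K) (x : K) (c C dh β : ℝ)
    (hc : 0 < c) (hC : 0 < C) (hdh : 0 < dh) (hβ : dh ≤ β)
    (hA : ∀ r : ℝ, r ∈ Set.Ioc (0:ℝ) 1 →
      ENNReal.ofReal (c * r ^ dh) ≤ μ (Metric.closedBall x r) ∧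
        μ (Metric.closedBall x r) ≤ ENNReal.ofReal (C * r ^ dh))
    (f : K → ℝ≥0∞) (hf : Measurable f) (κ r₀ : ℝ) (hκ : 0 < κ) (hr₀ : 0 < r₀)
    (hfb : ∀ y : K, y ≠ x → dist y x ≤ r₀ →
      ENNReal.ofReal (κ * dist y x ^ (-β)) ≤ f y) :
    ∫⁻ y, f y ∂μ = ⊤ := by
  have h2 : (0:ℝ) < 1/2 := by norm_num
  have hβpos : 0 < β := lt_of_lt_of_le hdh hβ
  -- choose ρ = (1/2)^(k+1) with C * ρ^dh < c, ρ < r₀, ρ < 1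
  obtain ⟨k₁, hk₁⟩ := exists_pow_lt_of_lt_one (div_pos hc hC)
    (Real.rpow_lt_one h2.le (by norm_num) hdh)
  obtain ⟨k₂, hk₂⟩ := exists_pow_lt_of_lt_one hr₀ (show (1/2:ℝ) < 1 by norm_num)
  set ρ : ℝ := (1/2:ℝ)^(max k₁ k₂ + 1) with hρdef
  have hρpos : 0 < ρ := pow_pos h2 _
  have hρlt1 : ρ < 1 := pow_lt_one₀ h2.le (by norm_num) (Nat.succ_ne_zero _)
  have hρle1 : ρ ≤ 1 := hρlt1.le
  have hρr₀ : ρ ≤ r₀ := by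
    calc ρ ≤ (1/2:ℝ)^k₂ :=
          pow_le_pow_of_le_one h2.le (by norm_num) (le_trans (le_max_right _ _) (Nat.le_succ _))
    _ ≤ r₀ := hk₂.le
  have hρdh : C * ρ ^ dh < c := by
    have h1 : ρ ^ dh = ((1/2:ℝ)^dh)^(max k₁ k₂ + 1) := by
      rw [hρdef, ← Real.rpow_natCast (1/2:ℝ) (max k₁ k₂ + 1),
        ← Real.rpow_natCast ((1/2:ℝ)^dh) (max k₁ k₂ + 1),
        ← Real.rpow_mul h2.le, ← Real.rpow_mul h2.le, mul_comm]
    have h2' : ((1/2:ℝ)^dh)^(max k₁ k₂ + 1) ≤ ((1/2:ℝ)^dh)^k₁ :=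
      pow_le_pow_of_le_one (Real.rpow_nonneg h2.le _)
        (Real.rpow_le_one h2.le (by norm_num) hdh.le)
        (le_trans (le_max_left _ _) (Nat.le_succ _))
    rw [h1]
    calc C * ((1/2:ℝ)^dh)^(max k₁ k₂ + 1) ≤ C * ((1/2:ℝ)^dh)^k₁ := by nlinarith
    _ < c := by rw [mul_comm]; exact (lt_div_iff₀ hC).1 hk₁
  -- positive constant
  set c' : ℝ := c - C * ρ ^ dh with hc'def
  have hc' : 0 < c' := by simp [hc'def]; linarith
  -- radii facts
  have hpow_pos : ∀ m : ℕ, (0:ℝ) < ρ ^ m := fun m => pow_pos hρpos m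
  have hpow_le1 : ∀ m : ℕ, ρ ^ m ≤ 1 := fun m => pow_le_one₀ hρpos.le hρle1
  have hmem : ∀ m : ℕ, (ρ ^ m) ∈ Set.Ioc (0:ℝ) 1 := fun m => ⟨hpow_pos m, hpow_le1 m⟩
  -- annuli
  set B : ℕ → Set K := fun n =>
    Metric.closedBall x (ρ^(n+1)) \ Metric.closedBall x (ρ^(n+2)) with hBdef
  have hBm : ∀ n, MeasurableSet (B n) :=
    fun n => measurableSet_closedBall.diff measurableSet_closedBall
  have hBdisj : Pairwise (Function.onFun Disjoint B) := by
    have key : ∀ m n : ℕ, m < n → Disjoint (B m) (B n) := by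
      intro m n hmn
      rw [Set.disjoint_left]
      rintro y ⟨-, hy2⟩ ⟨hy3, -⟩
      apply hy2
      refine mem_closedBall.2 (le_trans (mem_closedBall.1 hy3) ?_)
      exact pow_le_pow_of_le_one hρpos.le hρle1 (by omega)
    intro m n hmn
    rcases hmn.lt_or_gt with h | h
    · exact key m n h
    · exact (key n m h).symm
  -- measure lower bound on annuli
  have hBmeas : ∀ n : ℕ, ENNReal.ofReal (c' * (ρ^(n+1)) ^ dh) ≤ μ (B n) := by
    intro n
    have hsub : Metric.closedBall x (ρ^(n+2)) ⊆ Metric.closedBall x (ρ^(n+1)) :=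
      closedBall_subset_closedBall (pow_le_pow_of_le_one hρpos.le hρle1 (by omega))
    have h1 : μ (Metric.closedBall x (ρ^(n+1))) - μ (Metric.closedBall x (ρ^(n+2))) ≤ μ (B n) :=
      le_measure_diff
    refine le_trans ?_ h1
    have hup : μ (Metric.closedBall x (ρ^(n+2))) ≤ ENNReal.ofReal (C * (ρ^(n+2)) ^ dh) :=
      (hA _ (hmem (n+2))).2
    have hlo : ENNReal.ofReal (c * (ρ^(n+1)) ^ dh) ≤ μ (Metric.closedBall x (ρ^(n+1))) :=
      (hA _ (hmem (n+1))).1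
    refine le_trans ?_ (tsub_le_tsub hlo hup)
    rw [← ENNReal.ofReal_sub _ (by positivity)]
    apply ENNReal.ofReal_le_ofReal
    have hsplit : (ρ^(n+2):ℝ) ^ dh = ρ ^ dh * (ρ^(n+1)) ^ dh := by
      rw [show ρ^(n+2) = ρ * ρ^(n+1) by ring, Real.mul_rpow hρpos.le (hpow_pos (n+1)).le]
    rw [hsplit, hc'def]
    ring_nf
    nlinarith [hpow_pos (n+1), Real.rpow_nonneg (hpow_pos (n+1)).le dh]
  -- integral lower bound on annuli
  have hterm : ∀ n : ℕ, ENNReal.ofReal (κ * c') ≤ ∫⁻ y in B n, f y ∂μ := by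
    intro n
    have hconst : ∫⁻ _ in B n, ENNReal.ofReal (κ * (ρ^(n+1)) ^ (-β)) ∂μ ≤
        ∫⁻ y in B n, f y ∂μ := by
      refine setLIntegral_mono hf ?_
      intro y hy
      obtain ⟨hy1, hy2⟩ := hy
      have hy1' : dist y x ≤ ρ^(n+1) := mem_closedBall.1 hy1
      have hy2' : ρ^(n+2) < dist y x := by
        by_contra h
        exact hy2 (mem_closedBall.2 (not_lt.1 h))
      have hyx : y ≠ x := by
        intro h
        rw [h, dist_self] at hy2'
        exact absurd hy2' (not_lt.2 (hpow_pos _).le)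
      have hρ1 : ρ^(n+1) ≤ r₀ := by
        calc ρ^(n+1) ≤ ρ^1 := pow_le_pow_of_le_one hρpos.le hρle1 (by omega)
          _ = ρ := pow_one ρ
          _ ≤ r₀ := hρr₀
      refine le_trans ?_ (hfb y hyx (le_trans hy1' hρ1))
      apply ENNReal.ofReal_le_ofReal
      have hd0 : 0 < dist y x := lt_trans (hpow_pos _) hy2'
      exact mul_le_mul_of_nonneg_left
        (Real.rpow_le_rpow_of_nonpos hd0 hy1' (neg_nonpos.2 hβpos.le)) hκ.le
    rw [setLIntegral_const] at hconst
    refine le_trans ?_ hconst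
    calc ENNReal.ofReal (κ * c')
        ≤ ENNReal.ofReal (κ * (ρ^(n+1)) ^ (-β) * (c' * (ρ^(n+1)) ^ dh)) := by
          apply ENNReal.ofReal_le_ofReal
          have he : κ * (ρ^(n+1)) ^ (-β) * (c' * (ρ^(n+1)) ^ dh)
              = (κ * c') * (ρ^(n+1)) ^ (dh - β) := by
            rw [show (ρ^(n+1):ℝ) ^ (dh - β) = (ρ^(n+1)) ^ (-β) * (ρ^(n+1)) ^ dh by
              rw [← Real.rpow_add (hpow_pos (n+1))]; ring_nf]
            ring
          rw [he]
          have hge1 : (1:ℝ) ≤ (ρ^(n+1)) ^ (dh - β) :=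
            Real.one_le_rpow_of_pos_of_le_one_of_nonpos (hpow_pos _) (hpow_le1 _) (by linarith)
          nlinarith [mul_pos hκ hc', hge1]
      _ ≤ ENNReal.ofReal (κ * (ρ^(n+1)) ^ (-β)) * ENNReal.ofReal (c' * (ρ^(n+1)) ^ dh) := by
          rw [← ENNReal.ofReal_mul (by positivity)]
      _ ≤ ENNReal.ofReal (κ * (ρ^(n+1)) ^ (-β)) * μ (B n) :=
          mul_le_mul_right (hBmeas n) _
  -- conclude
  rw [eq_top_iff]
  calc (⊤:ℝ≥0∞) = ∑' _ : ℕ, ENNReal.ofReal (κ * c') :=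
        (ENNReal.tsum_const_eq_top_of_ne_zero (by positivity)).symm
    _ ≤ ∑' n, ∫⁻ y in B n, f y ∂μ := ENNReal.tsum_le_tsum hterm
    _ = ∫⁻ y in ⋃ n, B n, f y ∂μ := (lintegral_iUnion hBm hBdisj f).symm
    _ ≤ ∫⁻ y, f y ∂μ := setLIntegral_le_lintegral _ _

/-- For a kernel `G` with the two-sided bound
`C₁ d(x,y)^{s d_w - d_h} − C₂ ≤ G(x,y) ≤ C₃ d(x,y)^{s d_w - d_h}` off the diagonal
(`0 < s < d_h/d_w`), for `p > 0` and `x ∈ K`, `y ↦ G(x,y)` belongs to `L^p(K,μ)` iff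
`s > (p−1) d_h / (p d_w)`. -/
theorem riesz_kernel_memLp_iff
    {K : Type*} [MetricSpace K] [CompactSpace K] [MeasurableSpace K] [BorelSpace K]
    (μ : Measure K) [IsProbabilityMeasure μ]
    (dh dw c C : ℝ) (hdh : 0 < dh) (hdw : 1 < dw) (hc : 0 < c) (hC : 0 < C)
    (hdiam : Metric.diam (Set.univ : Set K) ≤ 1)
    (hAhl : ∀ (x : K) (r : ℝ), r ∈ Set.Ioc (0 : ℝ) 1 →
      ENNReal.ofReal (c * r ^ dh) ≤ μ (Metric.closedBall x r) ∧
        μ (Metric.closedBall x r) ≤ ENNReal.ofReal (C * r ^ dh))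
    (G : K → K → ℝ) (hGmeas : Measurable (Function.uncurry G))
    (s C₁ C₂ C₃ : ℝ) (hs : 0 < s) (hs' : s < dh / dw)
    (hC₁ : 0 < C₁) (hC₂ : 0 < C₂) (hC₃ : 0 < C₃)
    (hGlower : ∀ x y : K, x ≠ y → C₁ * dist x y ^ (s * dw - dh) - C₂ ≤ G x y)
    (hGupper : ∀ x y : K, x ≠ y → G x y ≤ C₃ * dist x y ^ (s * dw - dh))
    (p : ℝ) (hp : 0 < p) (x : K) :
    MemLp (fun y => G x y) (ENNReal.ofReal p) μ ↔ (p - 1) * dh / (p * dw) < s := by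
  have hdw0 : (0:ℝ) < dw := lt_trans one_pos hdw
  set t : ℝ := dh - s * dw with htdef
  have ht : 0 < t := by
    simp only [htdef, sub_pos]
    exact (lt_div_iff₀ hdw0).1 hs'
  have hst : s * dw - dh = -t := by simp only [htdef]; ring
  have hd1 : ∀ y : K, dist y x ≤ 1 := fun y =>
    le_trans (Metric.dist_le_diam_of_mem isCompact_univ.isBounded (mem_univ y) (mem_univ x)) hdiam
  have hAup : ∀ r : ℝ, r ∈ Set.Ioc (0:ℝ) 1 →
      μ (Metric.closedBall x r) ≤ ENNReal.ofReal (C * r ^ dh) := fun r hr => (hAhl x r hr).2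
  have hμx : μ ({x} : Set K) = 0 := aux_singleton μ x C dh hC hdh hAup
  have hmeasG : Measurable (fun y => G x y) := hGmeas.comp measurable_prodMk_left
  have hiff : ((p - 1) * dh / (p * dw) < s) ↔ t * p < dh := by
    rw [div_lt_iff₀ (by positivity)]
    constructor <;> intro h <;> nlinarith
  have hpne : ENNReal.ofReal p ≠ 0 := by simp [ENNReal.ofReal_eq_zero]; linarith
  have hptop : ENNReal.ofReal p ≠ ⊤ := ENNReal.ofReal_ne_top
  have hf_meas : Measurable (fun y => (‖G x y‖₊ : ℝ≥0∞) ^ p) :=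
    (hmeasG.nnnorm.coe_nnreal_ennreal).pow_const p
  rw [hiff]
  constructor
  · -- Memℒp → t * p < dh
    intro h
    by_contra hcon
    have hcon' : dh ≤ t * p := not_lt.1 hcon
    have hfin : ∫⁻ y, (‖G x y‖₊ : ℝ≥0∞) ^ p ∂μ < ⊤ := by
      have := MeasureTheory.lintegral_rpow_enorm_lt_top_of_eLpNorm_lt_top hpne hptop h.2
      rwa [ENNReal.toReal_ofReal hp.le] at this
    have htop : ∫⁻ y, (‖G x y‖₊ : ℝ≥0∞) ^ p ∂μ = ⊤ := by
      set r₀ : ℝ := min 1 ((C₁ / (2 * C₂)) ^ t⁻¹) with hr₀def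
      have hr₀pos : 0 < r₀ := lt_min one_pos (Real.rpow_pos_of_pos (by positivity) _)
      refine aux_eq_top μ x c C dh (t * p) hc hC hdh hcon' (hAhl x) _ hf_meas
        ((C₁/2) ^ p) r₀ (Real.rpow_pos_of_pos (by positivity) _) hr₀pos ?_
      intro y hyx hyr
      have hd0 : 0 < dist y x := dist_pos.2 hyx
      -- d^t ≤ C₁ / (2 C₂)
      have hdt : dist y x ^ t ≤ C₁ / (2 * C₂) := by
        have h1 : dist y x ≤ (C₁ / (2 * C₂)) ^ t⁻¹ := le_trans hyr (min_le_right _ _)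
        have h2 : dist y x ^ t ≤ ((C₁ / (2 * C₂)) ^ t⁻¹) ^ t :=
          Real.rpow_le_rpow hd0.le h1 ht.le
        rwa [← Real.rpow_mul (by positivity), inv_mul_cancel₀ ht.ne', Real.rpow_one] at h2
      -- C₂ ≤ (C₁/2) * d^(-t)
      have hdtpos : 0 < dist y x ^ t := Real.rpow_pos_of_pos hd0 _
      have h4 : 2 * C₂ * dist y x ^ t ≤ C₁ := by
        have := (le_div_iff₀ (by positivity : (0:ℝ) < 2*C₂)).1 hdt
        linarith
      have hinv : 2 * C₂ ≤ C₁ * dist y x ^ (-t) := by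
        rw [Real.rpow_neg hd0.le, ← div_eq_mul_inv, le_div_iff₀ hdtpos]
        linarith
      have hG1 : (C₁/2) * dist y x ^ (-t) ≤ G x y := by
        have := hGlower x y (Ne.symm hyx)
        rw [hst, dist_comm x y] at this
        linarith
      have hGpos : 0 < G x y :=
        lt_of_lt_of_le (by positivity) hG1
      -- conclude pointwise bound
      have e1 : ENNReal.ofReal ((C₁/2) ^ p * dist y x ^ (-(t*p)))
          = ENNReal.ofReal ((C₁/2) * dist y x ^ (-t)) ^ p := by
        rw [ENNReal.ofReal_rpow_of_nonneg (by positivity) hp.le]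
        congr 1
        rw [Real.mul_rpow (by positivity) (Real.rpow_nonneg hd0.le _),
          ← Real.rpow_mul hd0.le]
        ring_nf
      rw [e1]
      have e2 : ENNReal.ofReal ((C₁/2) * dist y x ^ (-t)) ≤ (‖G x y‖₊ : ℝ≥0∞) := by
        rw [← enorm_eq_nnnorm, Real.enorm_eq_ofReal_abs, abs_of_pos hGpos]
        exact ENNReal.ofReal_le_ofReal hG1
      exact ENNReal.rpow_le_rpow e2 hp.le
    rw [htop] at hfin
    exact absurd hfin (lt_irrefl _)
  · -- t * p < dh → Memℒp
    intro hcond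
    refine ⟨hmeasG.aestronglyMeasurable, ?_⟩
    rw [MeasureTheory.eLpNorm_lt_top_iff_lintegral_rpow_enorm_lt_top hpne hptop,
      ENNReal.toReal_ofReal hp.le]
    have hax : ∀ᵐ y ∂μ, y ≠ x := by
      rw [MeasureTheory.ae_iff]
      convert hμx using 2
      ext y; simp
    have hptw : ∀ᵐ y ∂μ, (‖G x y‖₊ : ℝ≥0∞) ^ p ≤
        ENNReal.ofReal ((C₂ + C₃) ^ p) * ENNReal.ofReal (dist y x ^ (-(t*p))) := by
      filter_upwards [hax] with y hyx
      have hd0 : 0 < dist y x := dist_pos.2 hyx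
      have hone : (1:ℝ) ≤ dist y x ^ (-t) :=
        Real.one_le_rpow_of_pos_of_le_one_of_nonpos hd0 (hd1 y) (by linarith)
      have habs : |G x y| ≤ (C₂ + C₃) * dist y x ^ (-t) := by
        have hub := hGupper x y (Ne.symm hyx)
        have hlb := hGlower x y (Ne.symm hyx)
        rw [hst, dist_comm x y] at hub hlb
        rw [abs_le]
        constructor
        · nlinarith [Real.rpow_pos_of_pos hd0 (-t)]
        · nlinarith [Real.rpow_pos_of_pos hd0 (-t)]
      calc (‖G x y‖₊ : ℝ≥0∞) ^ p
          = ENNReal.ofReal |G x y| ^ p := by rw [← enorm_eq_nnnorm, Real.enorm_eq_ofReal_abs]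
        _ ≤ ENNReal.ofReal ((C₂ + C₃) * dist y x ^ (-t)) ^ p :=
            ENNReal.rpow_le_rpow (ENNReal.ofReal_le_ofReal habs) hp.le
        _ = ENNReal.ofReal ((C₂ + C₃) ^ p * dist y x ^ (-(t*p))) := by
            rw [ENNReal.ofReal_rpow_of_nonneg (by positivity) hp.le]
            congr 1
            rw [Real.mul_rpow (by positivity) (Real.rpow_nonneg hd0.le _),
              ← Real.rpow_mul hd0.le]
            ring_nf
        _ = ENNReal.ofReal ((C₂ + C₃) ^ p) * ENNReal.ofReal (dist y x ^ (-(t*p))) := by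
            rw [ENNReal.ofReal_mul (by positivity)]
    calc ∫⁻ y, (‖G x y‖₊ : ℝ≥0∞) ^ p ∂μ
        ≤ ∫⁻ y, ENNReal.ofReal ((C₂ + C₃) ^ p) * ENNReal.ofReal (dist y x ^ (-(t*p))) ∂μ :=
          lintegral_mono_ae hptw
      _ = ENNReal.ofReal ((C₂ + C₃) ^ p) * ∫⁻ y, ENNReal.ofReal (dist y x ^ (-(t*p))) ∂μ :=
          lintegral_const_mul' _ _ ENNReal.ofReal_ne_top
      _ < ⊤ := ENNReal.mul_lt_top ENNReal.ofReal_lt_top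
          (aux_lt_top μ x C dh (t*p) hC (by positivity) hcond hd1 hAup)
end

section
/- Let p_t(x,y) be a symmetric jointly continuous heat kernel on a compact metric space K satisfying the sub-Gaussian lower bound p_t(x,y) ≥ c₁ t^{-d_h/d_w} exp(−c₂ (d(x,y)^{d_w}/t)^{1/(d_w−1)}) for all x,y ∈ K and t ∈ (0,1), with d_w > 1, and satisfying sup_{x,y} |p_t(x,y) − 1| ≤ C e^{−λ₁ t} for t ≥ 1 with λ₁ > 0. Define for s ∈ (0, d_h/d_w) the kernel G_s(x,y) = (1/Γ(s)) ∫_0^∞ t^{s−1}(p_t(x,y) − 1) dt for x ≠ y. Then there exist positive constants C₁, C₂ such that G_s(x,y) ≥ C₁ d(x,y)^{s d_w − d_h} − C₂ for all x ≠ y in K. -/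
open MeasureTheory Metric Set Real

/-- If the heat kernel satisfies the sub-Gaussian lower bound on `(0,1)` and
exponential closeness to `1` for `t ≥ 1`, then for `s ∈ (0, d_h/d_w)` the Riesz kernel
`G_s(x,y) = (1/Γ(s)) ∫_0^∞ t^{s−1}(p_t(x,y) − 1) dt` satisfies
`G_s(x,y) ≥ C₁ d(x,y)^{s d_w − d_h} − C₂` for all `x ≠ y`. -/
theorem riesz_kernel_lower_bound
    {K : Type*} [MetricSpace K] [CompactSpace K]
    (dh dw : ℝ) (hdh : 0 < dh) (hdw : 1 < dw)
    (hdiam : Metric.diam (Set.univ : Set K) ≤ 1)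
    (p : ℝ → K → K → ℝ)
    (c₁ c₂ C lam₁ : ℝ) (hc₁ : 0 < c₁) (hc₂ : 0 < c₂) (hC : 0 < C) (hlam₁ : 0 < lam₁)
    (hlow : ∀ (t : ℝ), t ∈ Set.Ioo (0 : ℝ) 1 → ∀ x y : K,
      c₁ * t ^ (-(dh / dw)) * Real.exp (-c₂ * (dist x y ^ dw / t) ^ (1 / (dw - 1)))
        ≤ p t x y)
    (hlarge : ∀ (t : ℝ), 1 ≤ t → ∀ x y : K, |p t x y - 1| ≤ C * Real.exp (-lam₁ * t))
    (s : ℝ) (hs : 0 < s) (hs' : s < dh / dw)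
    (hint : ∀ x y : K, x ≠ y →
      IntegrableOn (fun t : ℝ => t ^ (s - 1) * (p t x y - 1)) (Set.Ioi 0))
    (G : K → K → ℝ)
    (hG : ∀ x y : K, x ≠ y →
      G x y = (1 / Real.Gamma s) * ∫ t in Set.Ioi (0 : ℝ), t ^ (s - 1) * (p t x y - 1)) :
    ∃ C₁ C₂ : ℝ, 0 < C₁ ∧ 0 < C₂ ∧ ∀ x y : K, x ≠ y →
      C₁ * dist x y ^ (s * dw - dh) - C₂ ≤ G x y := by
  have hdw0 : (0:ℝ) < dw := by linarith
  set e₀ := Real.exp (-(c₂ * 2 ^ (1 / (dw - 1)))) with he₀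
  set cs := min 1 ((2:ℝ) ^ ((1:ℝ) - s)) with hcs
  have hcs0 : 0 < cs := lt_min one_pos (Real.rpow_pos_of_pos two_pos _)
  have he₀0 : 0 < e₀ := Real.exp_pos _
  have hΓ : 0 < Real.Gamma s := Real.Gamma_pos_of_pos hs
  -- tail dominating function
  have hgint : IntegrableOn (fun t : ℝ => t ^ (s - 1) * (C * Real.exp (-lam₁ * t)))
      (Set.Ici 1) := by
    have h := integrableOn_rpow_mul_exp_neg_mul_rpow (p := 1) (s := s - 1) (b := lam₁)
      (by linarith) one_pos hlam₁
    have h2 : IntegrableOn (fun x : ℝ => x ^ (s - 1) * Real.exp (-lam₁ * x)) (Set.Ioi 0) :=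
      h.congr_fun (fun x _ => by simp only [Real.rpow_one]) measurableSet_Ioi
    have h2' : IntegrableOn (fun x : ℝ => C * (x ^ (s - 1) * Real.exp (-lam₁ * x)))
        (Set.Ioi 0) := h2.const_mul C
    have h3 := h2'.mono_set (fun x hx => Set.mem_Ioi.mpr (lt_of_lt_of_le one_pos hx))
    exact h3.congr_fun (fun x _ => by ring) measurableSet_Ici
  set A := ∫ t in Set.Ici (1:ℝ), t ^ (s - 1) * (C * Real.exp (-lam₁ * t)) with hA
  have hA0 : 0 ≤ A := setIntegral_nonneg measurableSet_Ici (fun t ht => by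
    have h1 : (0:ℝ) ≤ t := le_trans zero_le_one ht
    positivity)
  -- integral of t^(s-1) on (0,1)
  have hii : IntervalIntegrable (fun t : ℝ => t ^ (s - 1)) volume 0 1 :=
    intervalIntegral.intervalIntegrable_rpow' (by linarith)
  have hmono_int : IntegrableOn (fun t : ℝ => t ^ (s - 1)) (Set.Ioo 0 1) :=
    ((intervalIntegrable_iff_integrableOn_Ioc_of_le zero_le_one).mp hii).mono_set
      Set.Ioo_subset_Ioc_self
  have hmono_val : (∫ t in Set.Ioo (0:ℝ) 1, t ^ (s - 1)) = 1 / s := by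
    rw [← MeasureTheory.integral_Ioc_eq_integral_Ioo,
      ← intervalIntegral.integral_of_le zero_le_one,
      integral_rpow (Or.inl (by linarith)),
      Real.one_rpow, Real.zero_rpow (by linarith), sub_add_cancel]
    ring
  refine ⟨cs * c₁ * e₀ / 2 / Real.Gamma s, (1 / s + A) / Real.Gamma s,
    by positivity, by positivity, ?_⟩
  intro x y hxy
  set f := fun t : ℝ => t ^ (s - 1) * (p t x y - 1) with hf
  set r := dist x y with hrdef
  have hr0 : 0 < r := dist_pos.mpr hxy
  have hr1 : r ≤ 1 :=
    le_trans (dist_le_diam_of_mem isCompact_univ.isBounded (mem_univ x) (mem_univ y)) hdiam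
  set a := r ^ dw with ha
  have ha0 : 0 < a := Real.rpow_pos_of_pos hr0 _
  have ha1 : a ≤ 1 := Real.rpow_le_one hr0.le hr1 hdw0.le
  have hfint := hint x y hxy
  have hf1 : IntegrableOn f (Set.Ioo 0 1) := hfint.mono_set Set.Ioo_subset_Ioi_self
  have hf2 : IntegrableOn f (Set.Ici 1) :=
    hfint.mono_set (fun t ht => Set.mem_Ioi.mpr (lt_of_lt_of_le one_pos ht))
  have hdisj : Disjoint (Set.Ioo (0:ℝ) 1) (Set.Ici 1) :=
    Set.disjoint_left.mpr fun t ht h1 => absurd ht.2 (not_lt.mpr h1)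
  have hsplit : (∫ t in Set.Ioi (0:ℝ), f t)
      = (∫ t in Set.Ioo (0:ℝ) 1, f t) + ∫ t in Set.Ici (1:ℝ), f t := by
    rw [← Set.Ioo_union_Ici_eq_Ioi zero_lt_one]
    exact setIntegral_union hdisj measurableSet_Ici hf1 hf2
  -- tail bound
  have htail : -A ≤ ∫ t in Set.Ici (1:ℝ), f t := by
    have hpt : ∀ t ∈ Set.Ici (1:ℝ),
        -(t ^ (s - 1) * (C * Real.exp (-lam₁ * t))) ≤ f t := by
      intro t ht
      have h1 : (0:ℝ) ≤ t ^ (s - 1) := Real.rpow_nonneg (le_trans zero_le_one ht) _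
      have h2 := (abs_le.mp (hlarge t ht x y)).1
      calc -(t ^ (s - 1) * (C * Real.exp (-lam₁ * t)))
          = t ^ (s - 1) * (-(C * Real.exp (-lam₁ * t))) := by ring
        _ ≤ t ^ (s - 1) * (p t x y - 1) := mul_le_mul_of_nonneg_left h2 h1
    have := setIntegral_mono_on hgint.neg hf2 measurableSet_Ici hpt
    simp only [Pi.neg_apply] at this
    rwa [MeasureTheory.integral_neg, ← hA] at this
  -- middle part
  set q := fun t : ℝ => t ^ (s - 1) * p t x y with hq
  have hqint : IntegrableOn q (Set.Ioo 0 1) := by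
    have hsum : IntegrableOn (fun t : ℝ => f t + t ^ (s - 1)) (Set.Ioo 0 1) :=
      hf1.add hmono_int
    exact hsum.congr_fun (fun t _ => by simp only [hq, hf]; ring) measurableSet_Ioo
  have hq_eq : (∫ t in Set.Ioo (0:ℝ) 1, f t) = (∫ t in Set.Ioo (0:ℝ) 1, q t) - 1 / s := by
    rw [← hmono_val, ← MeasureTheory.integral_sub hqint hmono_int]
    exact setIntegral_congr_fun measurableSet_Ioo (fun t _ => by simp only [hq, hf]; ring)
  have hqpos : ∀ t ∈ Set.Ioo (0:ℝ) 1, 0 ≤ q t := by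
    intro t ht
    have hp := hlow t ht x y
    have h0 : (0:ℝ) < c₁ * t ^ (-(dh / dw)) *
        Real.exp (-c₂ * (dist x y ^ dw / t) ^ (1 / (dw - 1))) := by
      have := ht.1; positivity
    exact mul_nonneg (Real.rpow_nonneg ht.1.le _) (le_trans h0.le hp)
  have hsub : Set.Ioo (a / 2) a ⊆ Set.Ioo (0:ℝ) 1 := Set.Ioo_subset_Ioo (by positivity) ha1
  have hqsub : IntegrableOn q (Set.Ioo (a / 2) a) := hqint.mono_set hsub
  set m := cs * a ^ (s - 1) * (c₁ * a ^ (-(dh / dw)) * e₀) with hm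
  have hconst : ∀ t ∈ Set.Ioo (a / 2) a, m ≤ q t := by
    intro t ht
    obtain ⟨ht1, ht2⟩ := ht
    have ht0 : 0 < t := lt_trans (by positivity) ht1
    have htlt1 : t < 1 := lt_of_lt_of_le ht2 ha1
    have hp := hlow t ⟨ht0, htlt1⟩ x y
    have h1 : a ^ (-(dh / dw)) ≤ t ^ (-(dh / dw)) :=
      Real.rpow_le_rpow_of_nonpos ht0 ht2.le (by
        have : 0 < dh / dw := div_pos hdh hdw0
        linarith)
    have h2 : (r ^ dw / t) ^ (1 / (dw - 1)) ≤ (2:ℝ) ^ (1 / (dw - 1)) := by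
      apply Real.rpow_le_rpow (div_nonneg (Real.rpow_nonneg dist_nonneg _) ht0.le) ?_
        (le_of_lt (by rw [one_div]; exact inv_pos.mpr (by linarith)))
      rw [div_le_iff₀ ht0, ← ha]
      linarith
    have h3 : e₀ ≤ Real.exp (-c₂ * (r ^ dw / t) ^ (1 / (dw - 1))) := by
      apply Real.exp_le_exp.mpr
      nlinarith [mul_le_mul_of_nonneg_left h2 hc₂.le]
    have h4 : cs * a ^ (s - 1) ≤ t ^ (s - 1) := by
      rcases le_or_gt s 1 with hs1 | hs1
      · calc cs * a ^ (s - 1) ≤ 1 * a ^ (s - 1) :=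
              mul_le_mul_of_nonneg_right (min_le_left _ _) (Real.rpow_nonneg ha0.le _)
          _ = a ^ (s - 1) := one_mul _
          _ ≤ t ^ (s - 1) := Real.rpow_le_rpow_of_nonpos ht0 ht2.le (by linarith)
      · calc cs * a ^ (s - 1) ≤ (2:ℝ) ^ ((1:ℝ) - s) * a ^ (s - 1) :=
              mul_le_mul_of_nonneg_right (min_le_right _ _) (Real.rpow_nonneg ha0.le _)
          _ = (a / 2) ^ (s - 1) := by
              rw [Real.div_rpow ha0.le (by norm_num : (0:ℝ) ≤ 2),
                show (1:ℝ) - s = -(s - 1) by ring,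
                Real.rpow_neg (by norm_num : (0:ℝ) ≤ 2)]
              ring
          _ ≤ t ^ (s - 1) := Real.rpow_le_rpow (by positivity) ht1.le (by linarith)
    have h5 : c₁ * a ^ (-(dh / dw)) * e₀ ≤ p t x y := by
      refine le_trans ?_ hp
      have hba : c₁ * a ^ (-(dh / dw)) ≤ c₁ * t ^ (-(dh / dw)) :=
        mul_le_mul_of_nonneg_left h1 hc₁.le
      rw [← hrdef]
      exact mul_le_mul hba h3 he₀0.le (by positivity)
    calc m = cs * a ^ (s - 1) * (c₁ * a ^ (-(dh / dw)) * e₀) := hm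
      _ ≤ t ^ (s - 1) * p t x y := by
          apply mul_le_mul h4 h5 (by positivity) (Real.rpow_nonneg ht0.le _)
  have hlow_int : m * (a / 2) ≤ ∫ t in Set.Ioo (a / 2) a, q t := by
    have h := setIntegral_ge_of_const_le measurableSet_Ioo
      (by exact (measure_Ioo_lt_top).ne) hconst hqsub
    rw [measureReal_def, Real.volume_Ioo, ENNReal.toReal_ofReal (by linarith), smul_eq_mul,
      mul_comm (a - a / 2) m] at h
    calc m * (a / 2) = m * (a - a / 2) := by ring
      _ ≤ _ := h
  have hmid : (∫ t in Set.Ioo (a / 2) a, q t) ≤ ∫ t in Set.Ioo (0:ℝ) 1, q t :=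
    setIntegral_mono_set hqint
      ((ae_restrict_iff' measurableSet_Ioo).mpr (Filter.Eventually.of_forall hqpos))
      hsub.eventuallyLE
  have hma : m * (a / 2) = cs * c₁ * e₀ / 2 * r ^ (s * dw - dh) := by
    have hdwne : dw ≠ 0 := ne_of_gt hdw0
    have hexp : a ^ (s - dh / dw) = a ^ (s - 1) * a ^ (-(dh / dw)) * a := by
      rw [show s - dh / dw = s - 1 + -(dh / dw) + 1 by ring, Real.rpow_add ha0,
        Real.rpow_add ha0, Real.rpow_one]
    have hexp2 : a ^ (s - dh / dw) = r ^ (s * dw - dh) := by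
      rw [ha, ← Real.rpow_mul hr0.le]
      congr 1
      field_simp
    calc m * (a / 2) = cs * c₁ * e₀ / 2 * (a ^ (s - 1) * a ^ (-(dh / dw)) * a) := by
          rw [hm]; ring
      _ = cs * c₁ * e₀ / 2 * r ^ (s * dw - dh) := by rw [← hexp, hexp2]
  have key : cs * c₁ * e₀ / 2 * r ^ (s * dw - dh) - (1 / s + A)
      ≤ ∫ t in Set.Ioi (0:ℝ), f t := by
    rw [hsplit, hq_eq, ← hma]
    linarith
  rw [hG x y hxy]
  have hfinal := mul_le_mul_of_nonneg_left key (le_of_lt (by positivity : (0:ℝ) < 1 / Real.Gamma s))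
  calc cs * c₁ * e₀ / 2 / Real.Gamma s * r ^ (s * dw - dh) - (1 / s + A) / Real.Gamma s
      = 1 / Real.Gamma s * (cs * c₁ * e₀ / 2 * r ^ (s * dw - dh) - (1 / s + A)) := by
        field_simp
    _ ≤ 1 / Real.Gamma s * ∫ t in Set.Ioi (0:ℝ), f t := hfinal
end

section
/- Under the same hypotheses on the heat kernel p_t as in the lower-bound setting (sub-Gaussian lower bound for t ∈ (0,1), exponential decay of p_t − 1 for t ≥ 1), for s = d_h/d_w the kernel G_s(x,y) = (1/Γ(s)) ∫_0^∞ t^{s−1}(p_t(x,y) − 1) dt satisfies G_s(x,y) ≥ −C₁ ln d(x,y) − C₂ for all x ≠ y in K, for some positive constants C₁, C₂. -/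
open MeasureTheory Metric Set Real

/-- Under the same heat-kernel hypotheses as for the lower bound, for
`s = d_h/d_w` the Riesz kernel satisfies `G_s(x,y) ≥ −C₁ ln d(x,y) − C₂` for all `x ≠ y`. -/
theorem riesz_kernel_log_lower_bound
    {K : Type*} [MetricSpace K] [CompactSpace K]
    (dh dw : ℝ) (hdh : 0 < dh) (hdw : 1 < dw)
    (hdiam : Metric.diam (Set.univ : Set K) ≤ 1)
    (p : ℝ → K → K → ℝ)
    (c₁ c₂ C lam₁ : ℝ) (hc₁ : 0 < c₁) (hc₂ : 0 < c₂) (hC : 0 < C) (hlam₁ : 0 < lam₁)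
    (hlow : ∀ (t : ℝ), t ∈ Set.Ioo (0 : ℝ) 1 → ∀ x y : K,
      c₁ * t ^ (-(dh / dw)) * Real.exp (-c₂ * (dist x y ^ dw / t) ^ (1 / (dw - 1)))
        ≤ p t x y)
    (hlarge : ∀ (t : ℝ), 1 ≤ t → ∀ x y : K, |p t x y - 1| ≤ C * Real.exp (-lam₁ * t))
    (s : ℝ) (hs : s = dh / dw)
    (hint : ∀ x y : K, x ≠ y →
      IntegrableOn (fun t : ℝ => t ^ (s - 1) * (p t x y - 1)) (Set.Ioi 0))
    (G : K → K → ℝ)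
    (hG : ∀ x y : K, x ≠ y →
      G x y = (1 / Real.Gamma s) * ∫ t in Set.Ioi (0 : ℝ), t ^ (s - 1) * (p t x y - 1)) :
    ∃ C₁ C₂ : ℝ, 0 < C₁ ∧ 0 < C₂ ∧ ∀ x y : K, x ≠ y →
      -C₁ * Real.log (dist x y) - C₂ ≤ G x y := by
  have hs0 : 0 < s := hs ▸ div_pos hdh (lt_trans one_pos hdw)
  have hΓ : 0 < Real.Gamma s := Real.Gamma_pos_of_pos hs0
  -- the tail integral
  set J : ℝ := ∫ t in Set.Ici (1:ℝ), t ^ (s - 1) * Real.exp (-lam₁ * t) with hJ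
  have hJint : IntegrableOn (fun t : ℝ => t ^ (s - 1) * Real.exp (-lam₁ * t)) (Set.Ici 1) := by
    have h := integrableOn_rpow_mul_exp_neg_mul_rpow (p := 1) (s := s - 1) (b := lam₁)
      (by linarith) one_pos hlam₁
    simp only [Real.rpow_one] at h
    exact h.mono_set (fun t ht => Set.mem_Ioi.mpr (lt_of_lt_of_le one_pos (Set.mem_Ici.mp ht)))
  have hJ0 : 0 ≤ J := by
    apply setIntegral_nonneg measurableSet_Ici
    intro t ht
    have ht0 : (0:ℝ) ≤ t := le_trans zero_le_one ht
    positivity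
  refine ⟨c₁ * Real.exp (-c₂) * dw / Real.Gamma s, (2 / s + C * J) / Real.Gamma s,
    by positivity, by positivity, ?_⟩
  intro x y hxy
  set r : ℝ := dist x y with hr
  have hr0 : 0 < r := dist_pos.mpr hxy
  have hr1 : r ≤ 1 := le_trans (dist_le_diam_of_mem isCompact_univ.isBounded
    (mem_univ x) (mem_univ y)) hdiam
  set u : ℝ := r ^ dw with hu
  have hu0 : 0 < u := Real.rpow_pos_of_pos hr0 dw
  have hu1 : u ≤ 1 := Real.rpow_le_one hr0.le hr1 (by linarith)
  set f : ℝ → ℝ := fun t => t ^ (s - 1) * (p t x y - 1) with hf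
  have hfint : IntegrableOn f (Set.Ioi 0) := hint x y hxy
  have hsub1 : Set.Ioo (0:ℝ) u ⊆ Set.Ioi 0 := Set.Ioo_subset_Ioi_self
  have hsub2 : Set.Ico u (1:ℝ) ⊆ Set.Ioi 0 := fun t ht => lt_of_lt_of_le hu0 ht.1
  have hsub3 : Set.Ici (1:ℝ) ⊆ Set.Ioi 0 := fun t ht => Set.mem_Ioi.mpr (lt_of_lt_of_le one_pos (Set.mem_Ici.mp ht))
  have hsub12 : Set.Ioo (0:ℝ) 1 ⊆ Set.Ioi 0 := Set.Ioo_subset_Ioi_self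
  -- split the integral
  have hsplit : (∫ t in Set.Ioi (0:ℝ), f t)
      = (∫ t in Set.Ioo (0:ℝ) u, f t) + (∫ t in Set.Ico u (1:ℝ), f t)
        + (∫ t in Set.Ici (1:ℝ), f t) := by
    have e1 : Set.Ioi (0:ℝ) = Set.Ioo (0:ℝ) 1 ∪ Set.Ici 1 :=
      (Set.Ioo_union_Ici_eq_Ioi one_pos).symm
    have e2 : Set.Ioo (0:ℝ) 1 = Set.Ioo (0:ℝ) u ∪ Set.Ico u 1 :=
      (Set.Ioo_union_Ico_eq_Ioo hu0 hu1).symm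
    rw [e1, setIntegral_union ?d1 measurableSet_Ici
        (hfint.mono_set (e2 ▸ hsub12)) (hfint.mono_set hsub3),
      e2, setIntegral_union ?d2 measurableSet_Ico
        (hfint.mono_set hsub1) (hfint.mono_set hsub2)]
    case d1 =>
      rw [Set.disjoint_left]
      rintro a ⟨_, ha⟩ ha'
      exact absurd ha' (not_le.mpr ha)
    case d2 =>
      rw [Set.disjoint_left]
      rintro a ⟨_, ha⟩ ha'
      exact absurd ha'.1 (not_le.mpr ha)
  -- integrability of t^(s-1) on (0,1]
  have hrpow_int : IntegrableOn (fun t : ℝ => t ^ (s - 1)) (Set.Ioc (0:ℝ) 1) :=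
    (intervalIntegral.intervalIntegrable_rpow' (by linarith)).1
  have hrpow_val : (∫ t in Set.Ioo (0:ℝ) 1, t ^ (s - 1)) = 1 / s := by
    rw [← MeasureTheory.integral_Ioc_eq_integral_Ioo,
      ← intervalIntegral.integral_of_le zero_le_one, integral_rpow (Or.inl (by linarith))]
    rw [sub_add_cancel, Real.one_rpow, Real.zero_rpow hs0.ne']
    ring
  -- Estimate 1 : small times
  have hE1 : -(1 / s) ≤ ∫ t in Set.Ioo (0:ℝ) u, f t := by
    have hmono : (∫ t in Set.Ioo (0:ℝ) u, -(t ^ (s - 1))) ≤ ∫ t in Set.Ioo (0:ℝ) u, f t := by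
      apply setIntegral_mono_on
      · exact (hrpow_int.mono_set (fun t ht => ⟨ht.1, le_trans ht.2.le hu1⟩)).neg
      · exact hfint.mono_set hsub1
      · exact measurableSet_Ioo
      · intro t ht
        have ht0 : 0 < t := ht.1
        have ht1 : t < 1 := lt_of_lt_of_le ht.2 hu1
        have hp : 0 ≤ p t x y := le_trans (by positivity) (hlow t ⟨ht0, ht1⟩ x y)
        have hts : (0:ℝ) ≤ t ^ (s - 1) := (Real.rpow_pos_of_pos ht0 _).le
        have : -1 ≤ p t x y - 1 := by linarith
        calc -(t ^ (s - 1)) = t ^ (s - 1) * (-1) := by ring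
          _ ≤ t ^ (s - 1) * (p t x y - 1) := mul_le_mul_of_nonneg_left this hts
    have hss : (∫ t in Set.Ioo (0:ℝ) u, t ^ (s - 1)) ≤ ∫ t in Set.Ioo (0:ℝ) 1, t ^ (s - 1) := by
      apply setIntegral_mono_set
      · exact hrpow_int.mono_set Set.Ioo_subset_Ioc_self
      · filter_upwards [self_mem_ae_restrict measurableSet_Ioo] with t ht
        exact (Real.rpow_pos_of_pos ht.1 _).le
      · exact Filter.Eventually.of_forall (fun t ht => ⟨ht.1, lt_of_lt_of_le ht.2 hu1⟩)
    rw [integral_neg] at hmono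
    rw [hrpow_val] at hss
    linarith
  -- Estimate 2 : middle range
  have hE2 : c₁ * Real.exp (-c₂) * (dw * (-Real.log r)) - 1 / s
      ≤ ∫ t in Set.Ico u (1:ℝ), f t := by
    set g : ℝ → ℝ := fun t => c₁ * Real.exp (-c₂) * t⁻¹ - t ^ (s - 1) with hg
    have hgcont : ContinuousOn g (Set.Icc u 1) := by
      apply ContinuousOn.sub
      · exact continuousOn_const.mul (continuousOn_inv₀.mono
          (fun t ht => ne_of_gt (lt_of_lt_of_le hu0 ht.1)))
      · exact fun t ht => (Real.continuousAt_rpow_const t (s-1)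
          (Or.inl (ne_of_gt (lt_of_lt_of_le hu0 ht.1)))).continuousWithinAt
    have hgint : IntegrableOn g (Set.Ico u 1) :=
      (hgcont.integrableOn_Icc).mono_set Set.Ico_subset_Icc_self
    have hmono : (∫ t in Set.Ico u (1:ℝ), g t) ≤ ∫ t in Set.Ico u (1:ℝ), f t := by
      apply setIntegral_mono_on hgint (hfint.mono_set hsub2) measurableSet_Ico
      intro t ht
      have ht0 : 0 < t := lt_of_lt_of_le hu0 ht.1
      have ht1 : t < 1 := ht.2
      -- exponent estimate
      have hexp : Real.exp (-c₂) ≤ Real.exp (-c₂ * (r ^ dw / t) ^ (1 / (dw - 1))) := by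
        apply Real.exp_le_exp.mpr
        have hfrac : r ^ dw / t ≤ 1 := (div_le_one ht0).mpr ht.1
        have hfrac0 : 0 ≤ r ^ dw / t := div_nonneg hu0.le ht0.le
        have : (r ^ dw / t) ^ (1 / (dw - 1)) ≤ 1 :=
          Real.rpow_le_one hfrac0 hfrac (le_of_lt (div_pos one_pos (by linarith)))
        nlinarith [Real.rpow_nonneg hfrac0 (1 / (dw - 1))]
      have hplow : c₁ * t ^ (-s) * Real.exp (-c₂) ≤ p t x y := by
        refine le_trans ?_ (hlow t ⟨ht0, ht1⟩ x y)
        rw [hs]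
        exact mul_le_mul_of_nonneg_left hexp (by positivity)
      have hts : (0:ℝ) < t ^ (s - 1) := Real.rpow_pos_of_pos ht0 _
      have hkey : t ^ (s - 1) * (c₁ * t ^ (-s) * Real.exp (-c₂)) = c₁ * Real.exp (-c₂) * t⁻¹ := by
        rw [show t ^ (s-1) * (c₁ * t ^ (-s) * Real.exp (-c₂))
            = c₁ * Real.exp (-c₂) * (t ^ (s-1) * t ^ (-s)) by ring,
          ← Real.rpow_add ht0, show s - 1 + -s = -1 by ring, Real.rpow_neg_one]
      have : t ^ (s - 1) * (c₁ * t ^ (-s) * Real.exp (-c₂)) - t ^ (s-1)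
          ≤ t ^ (s - 1) * (p t x y - 1) := by
        have := mul_le_mul_of_nonneg_left hplow hts.le
        nlinarith
      rw [hkey] at this
      exact this
    -- compute ∫ g
    have hIinv : (∫ t in Set.Ico u (1:ℝ), t⁻¹) = -Real.log u := by
      rw [MeasureTheory.integral_Ico_eq_integral_Ioo, ← MeasureTheory.integral_Ioc_eq_integral_Ioo,
        ← intervalIntegral.integral_of_le hu1, integral_inv]
      · rw [one_div, Real.log_inv]
      · rw [Set.uIcc_of_le hu1]
        rintro ⟨h1, -⟩
        exact absurd h1 (not_le.mpr hu0)
    have hinv_int : IntegrableOn (fun t : ℝ => t⁻¹) (Set.Ico u 1) :=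
      ((continuousOn_inv₀.mono (fun t ht => ne_of_gt (lt_of_lt_of_le hu0 ht.1))
        : ContinuousOn (fun t : ℝ => t⁻¹) (Set.Icc u 1)).integrableOn_Icc).mono_set
        Set.Ico_subset_Icc_self
    have hrp_int2 : IntegrableOn (fun t : ℝ => t ^ (s - 1)) (Set.Ico u 1) :=
      hrpow_int.mono_set (fun t ht => ⟨lt_of_lt_of_le hu0 ht.1, ht.2.le⟩)
    have hgval : (∫ t in Set.Ico u (1:ℝ), g t)
        = c₁ * Real.exp (-c₂) * (-Real.log u) - ∫ t in Set.Ico u (1:ℝ), t ^ (s - 1) := by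
      rw [hg]
      rw [MeasureTheory.integral_sub (hinv_int.const_mul _) hrp_int2,
        MeasureTheory.integral_const_mul, hIinv]
    have hrp_le : (∫ t in Set.Ico u (1:ℝ), t ^ (s - 1)) ≤ 1 / s := by
      rw [← hrpow_val]
      apply setIntegral_mono_set
      · exact hrpow_int.mono_set Set.Ioo_subset_Ioc_self
      · filter_upwards [self_mem_ae_restrict measurableSet_Ioo] with t ht
        exact (Real.rpow_pos_of_pos ht.1 _).le
      · exact Filter.Eventually.of_forall (fun t ht => ⟨lt_of_lt_of_le hu0 ht.1, ht.2⟩)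
    have hlogu : -Real.log u = dw * (-Real.log r) := by
      rw [hu, Real.log_rpow hr0]; ring
    have hce : (0:ℝ) ≤ c₁ * Real.exp (-c₂) := by positivity
    rw [hgval, hlogu] at hmono
    nlinarith
  -- Estimate 3 : large times
  have hE3 : -(C * J) ≤ ∫ t in Set.Ici (1:ℝ), f t := by
    have hmono : (∫ t in Set.Ici (1:ℝ), -(C * (t ^ (s - 1) * Real.exp (-lam₁ * t))))
        ≤ ∫ t in Set.Ici (1:ℝ), f t := by
      apply setIntegral_mono_on ((hJint.const_mul C).neg) (hfint.mono_set hsub3)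
        measurableSet_Ici
      intro t ht
      have ht0 : (0:ℝ) < t := lt_of_lt_of_le one_pos ht
      have hts : (0:ℝ) ≤ t ^ (s - 1) := (Real.rpow_pos_of_pos ht0 _).le
      have habs := hlarge t ht x y
      have h1 : -(C * Real.exp (-lam₁ * t)) ≤ p t x y - 1 := by
        have := abs_le.mp habs
        linarith [this.1]
      calc -(C * (t ^ (s - 1) * Real.exp (-lam₁ * t)))
          = t ^ (s - 1) * (-(C * Real.exp (-lam₁ * t))) := by ring
        _ ≤ t ^ (s - 1) * (p t x y - 1) := mul_le_mul_of_nonneg_left h1 hts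
    rw [integral_neg, MeasureTheory.integral_const_mul] at hmono
    rw [hJ]
    exact hmono
  -- Combine
  have hG' := hG x y hxy
  have hI : c₁ * Real.exp (-c₂) * (dw * (-Real.log r)) - (2 / s + C * J)
      ≤ ∫ t in Set.Ioi (0:ℝ), f t := by
    rw [hsplit]
    have : -(1/s) + (c₁ * Real.exp (-c₂) * (dw * (-Real.log r)) - 1 / s) + -(C * J)
        = c₁ * Real.exp (-c₂) * (dw * (-Real.log r)) - (2 / s + C * J) := by ring
    linarith [add_le_add (add_le_add hE1 hE2) hE3]
  have hΓinv : (0:ℝ) < 1 / Real.Gamma s := by positivity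
  have := mul_le_mul_of_nonneg_left hI hΓinv.le
  rw [hG']
  calc -(c₁ * Real.exp (-c₂) * dw / Real.Gamma s) * Real.log r
        - (2 / s + C * J) / Real.Gamma s
      = (1 / Real.Gamma s) *
        (c₁ * Real.exp (-c₂) * (dw * (-Real.log r)) - (2 / s + C * J)) := by
        field_simp
    _ ≤ (1 / Real.Gamma s) * ∫ t in Set.Ioi (0:ℝ), f t := this
end

section
/- Let η > 0, β ∈ {0,1}, and let h₀ ∈ (0, 1/e] be such that p(h) = h^η (−ln h)^β is increasing on (0, h₀] (extended by p(0)=0). Then there exists a constant c > 0 such that for all r ∈ (0, h₀], the Stieltjes integral ∫_0^r √(|ln u|) dp(u) ≤ c · r^η (−ln r)^{β + 1/2}. -/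
open MeasureTheory Set Real

/-- Let `η > 0`, `β ∈ {0,1}`, `h₀ ∈ (0,1/e]` with `p(h) = h^η (−ln h)^β`
increasing on `(0,h₀]` (and `p(0)=0`, realized as a Stieltjes function). Then there is
`c > 0` with `∫_0^r √|ln u| dp(u) ≤ c r^η (−ln r)^{β+1/2}` for all `r ∈ (0,h₀]`. -/
theorem stieltjes_log_integral_bound
    (η β : ℝ) (hη : 0 < η) (hβ : β = 0 ∨ β = 1)
    (h₀ : ℝ) (hh₀ : h₀ ∈ Set.Ioc (0 : ℝ) (1 / Real.exp 1))
    (p : StieltjesFunction ℝ)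
    (hp0 : p 0 = 0)
    (hp : ∀ h ∈ Set.Ioc (0 : ℝ) h₀, p h = h ^ η * (-Real.log h) ^ β) :
    ∃ c : ℝ, 0 < c ∧ ∀ r ∈ Set.Ioc (0 : ℝ) h₀,
      (∫⁻ u in Set.Ioc (0 : ℝ) r, ENNReal.ofReal (Real.sqrt |Real.log u|) ∂p.measure)
        ≤ ENNReal.ofReal (c * r ^ η * (-Real.log r) ^ (β + 1 / 2)) := by
  set q : ℝ := Real.exp (-η) with hq
  have hq0 : 0 < q := Real.exp_pos _
  have hq1 : q < 1 := Real.exp_lt_one_iff.2 (by linarith)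
  have hsum : Summable (fun k : ℕ => ((k : ℝ) + 2) ^ 2 * q ^ k) := by
    have hnorm : ‖q‖ < 1 := by rwa [Real.norm_eq_abs, abs_of_pos hq0]
    have h2 : Summable (fun k : ℕ => ((k : ℝ)) ^ 2 * q ^ k) := by
      simpa using summable_pow_mul_geometric_of_norm_lt_one 2 hnorm
    have h1 : Summable (fun k : ℕ => ((k : ℝ)) * q ^ k) := by
      simpa using summable_pow_mul_geometric_of_norm_lt_one 1 hnorm
    have h0 : Summable (fun k : ℕ => (q : ℝ) ^ k) :=
      summable_geometric_of_lt_one hq0.le hq1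
    have := h2.add ((h1.mul_left 4).add (h0.mul_left 4))
    convert this using 2 with k
    ring
  set S : ℝ := ∑' k : ℕ, ((k : ℝ) + 2) ^ 2 * q ^ k with hS
  have hS0 : 0 ≤ S := tsum_nonneg fun k => by positivity
  refine ⟨1 + S, by linarith, ?_⟩
  rintro r ⟨hr0, hrh⟩
  set L : ℝ := -Real.log r with hL
  have hre : r ≤ Real.exp (-1) := by
    calc r ≤ h₀ := hrh
    _ ≤ 1 / Real.exp 1 := hh₀.2
    _ = Real.exp (-1) := by rw [Real.exp_neg]; ring
  have hL1 : 1 ≤ L := by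
    have := Real.log_le_log hr0 hre
    rw [Real.log_exp] at this
    simp only [hL]; linarith
  have hL0 : 0 < L := by linarith
  -- the dyadic pieces
  set s : ℕ → Set ℝ := fun k => Ioc (r * Real.exp (-((k : ℝ) + 1))) (r * Real.exp (-(k : ℝ))) with hs
  have hcover : Ioc (0 : ℝ) r ⊆ ⋃ k : ℕ, s k := by
    rintro u ⟨hu0, hur⟩
    have ht0 : 0 ≤ Real.log r - Real.log u := by
      have := Real.log_le_log hu0 hur; linarith
    set t := Real.log r - Real.log u with htdef
    refine mem_iUnion.2 ⟨⌊t⌋₊, ?_, ?_⟩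
    · have h1 : t < (⌊t⌋₊ : ℝ) + 1 := Nat.lt_floor_add_one t
      have hlt : Real.log r + (-((⌊t⌋₊ : ℝ) + 1)) < Real.log u := by
        simp only [htdef] at h1; linarith
      calc r * Real.exp (-((⌊t⌋₊ : ℝ) + 1))
          = Real.exp (Real.log r + (-((⌊t⌋₊ : ℝ) + 1))) := by
            rw [Real.exp_add, Real.exp_log hr0]
        _ < Real.exp (Real.log u) := Real.exp_lt_exp.2 hlt
        _ = u := Real.exp_log hu0
    · have h2 : (⌊t⌋₊ : ℝ) ≤ t := Nat.floor_le ht0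
      have hle : Real.log u ≤ Real.log r + (-(⌊t⌋₊ : ℝ)) := by
        simp only [htdef] at h2; linarith
      calc u = Real.exp (Real.log u) := (Real.exp_log hu0).symm
        _ ≤ Real.exp (Real.log r + (-(⌊t⌋₊ : ℝ))) := Real.exp_le_exp.2 hle
        _ = r * Real.exp (-(⌊t⌋₊ : ℝ)) := by rw [Real.exp_add, Real.exp_log hr0]
  -- bound on each piece
  set a : ℕ → ℝ := fun k =>
    Real.sqrt (L + (k : ℝ) + 1) * ((r * Real.exp (-(k : ℝ))) ^ η * (L + (k : ℝ)) ^ β) with ha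
  have hbk : ∀ k : ℕ, (r * Real.exp (-(k : ℝ))) ∈ Set.Ioc (0 : ℝ) h₀ := by
    intro k
    have hek : Real.exp (-(k : ℝ)) ≤ 1 :=
      Real.exp_le_one_iff.2 (neg_nonpos.2 (Nat.cast_nonneg k))
    constructor
    · positivity
    · nlinarith
  have hlogb : ∀ k : ℕ, -Real.log (r * Real.exp (-(k : ℝ))) = L + (k : ℝ) := by
    intro k
    rw [Real.log_mul (ne_of_gt hr0) (ne_of_gt (Real.exp_pos _)), Real.log_exp]
    simp [hL]; ring
  have hterm : ∀ k : ℕ,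
      (∫⁻ u in s k, ENNReal.ofReal (Real.sqrt |Real.log u|) ∂p.measure)
        ≤ ENNReal.ofReal (a k) := by
    intro k
    have hak : ∀ u ∈ s k, Real.sqrt |Real.log u| ≤ Real.sqrt (L + (k : ℝ) + 1) := by
      rintro u ⟨hu1, hu2⟩
      have hu0 : 0 < u := lt_trans (by positivity) hu1
      have hu_lt1 : u < 1 := by
        have hek : Real.exp (-(k : ℝ)) ≤ 1 :=
          Real.exp_le_one_iff.2 (neg_nonpos.2 (Nat.cast_nonneg k))
        have he1 : Real.exp (-1 : ℝ) < 1 := Real.exp_lt_one_iff.2 (by norm_num)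
        nlinarith
      have hlogneg : Real.log u < 0 := Real.log_neg hu0 hu_lt1
      rw [abs_of_neg hlogneg]
      apply Real.sqrt_le_sqrt
      have := Real.log_lt_log (by positivity) hu1
      rw [Real.log_mul (ne_of_gt hr0) (ne_of_gt (Real.exp_pos _)), Real.log_exp] at this
      simp only [hL]; linarith
    calc (∫⁻ u in s k, ENNReal.ofReal (Real.sqrt |Real.log u|) ∂p.measure)
        ≤ ∫⁻ _ in s k, ENNReal.ofReal (Real.sqrt (L + (k : ℝ) + 1)) ∂p.measure := by
          apply setLIntegral_mono measurable_const
          intro x hx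
          exact ENNReal.ofReal_le_ofReal (hak x hx)
      _ = ENNReal.ofReal (Real.sqrt (L + (k : ℝ) + 1)) * p.measure (s k) :=
          setLIntegral_const _ _
      _ ≤ ENNReal.ofReal (Real.sqrt (L + (k : ℝ) + 1)) *
            ENNReal.ofReal ((r * Real.exp (-(k : ℝ))) ^ η * (L + (k : ℝ)) ^ β) := by
          apply mul_le_mul_right
          rw [hs]
          rw [StieltjesFunction.measure_Ioc]
          apply ENNReal.ofReal_le_ofReal
          have hb := hp _ (hbk k)
          rw [hlogb k] at hb
          rw [hb]
          have hamem : (r * Real.exp (-((k : ℝ) + 1))) ∈ Set.Ioc (0 : ℝ) h₀ := by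
            have := hbk (k + 1)
            simpa [Nat.cast_add, Nat.cast_one] using this
          have hpa : 0 ≤ p (r * Real.exp (-((k : ℝ) + 1))) := by
            rw [hp _ hamem]
            have h1 : (0:ℝ) ≤ (r * Real.exp (-((k : ℝ) + 1))) ^ η :=
              Real.rpow_nonneg (by positivity) _
            have h2 : (0:ℝ) ≤ (-Real.log (r * Real.exp (-((k : ℝ) + 1)))) ^ β := by
              apply Real.rpow_nonneg
              rw [Real.log_mul (ne_of_gt hr0) (ne_of_gt (Real.exp_pos _)), Real.log_exp]
              simp only [hL] at hL0 ⊢; linarith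
            positivity
          linarith
      _ = ENNReal.ofReal (a k) := by
          rw [← ENNReal.ofReal_mul (Real.sqrt_nonneg _)]
  -- bound a k by the geometric-type series
  have habound : ∀ k : ℕ,
      a k ≤ r ^ η * L ^ (β + 1 / 2) * (((k : ℝ) + 2) ^ 2 * q ^ k) := by
    intro k
    have hk0 : (0:ℝ) ≤ (k : ℝ) := Nat.cast_nonneg k
    have hk2 : (1:ℝ) ≤ (k : ℝ) + 2 := by linarith
    have hA : Real.sqrt (L + (k : ℝ) + 1) ≤ Real.sqrt L * ((k : ℝ) + 2) := by
      have hprod : (1:ℝ) * (((k:ℝ)+2)^2 - 1) ≤ L * (((k:ℝ)+2)^2 - 1) :=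
        mul_le_mul_of_nonneg_right hL1 (by nlinarith)
      have h1 : L + (k : ℝ) + 1 ≤ L * ((k : ℝ) + 2) ^ 2 := by nlinarith
      calc Real.sqrt (L + (k : ℝ) + 1) ≤ Real.sqrt (L * ((k : ℝ) + 2) ^ 2) :=
            Real.sqrt_le_sqrt h1
        _ = Real.sqrt L * ((k : ℝ) + 2) := by
            rw [Real.sqrt_mul hL0.le, Real.sqrt_sq (by positivity)]
    have hB : (L + (k : ℝ)) ^ β ≤ L ^ β * ((k : ℝ) + 2) := by
      rcases hβ with h | h
      · rw [h, Real.rpow_zero, Real.rpow_zero]; linarith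
      · rw [h, Real.rpow_one, Real.rpow_one]
        have hprod : (1:ℝ) * ((k:ℝ)+1) ≤ L * ((k:ℝ)+1) :=
          mul_le_mul_of_nonneg_right hL1 (by linarith)
        nlinarith
    have hx : (r * Real.exp (-(k : ℝ))) ^ η = r ^ η * q ^ k := by
      rw [Real.mul_rpow hr0.le (Real.exp_pos _).le]
      congr 1
      rw [Real.rpow_def_of_pos (Real.exp_pos _), Real.log_exp, hq,
        ← Real.exp_nat_mul]
      ring_nf
    have hLs : L ^ (β + 1 / 2) = L ^ β * Real.sqrt L := by
      rw [Real.rpow_add hL0, Real.sqrt_eq_rpow]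
    show Real.sqrt (L + (k : ℝ) + 1) * ((r * Real.exp (-(k : ℝ))) ^ η * (L + (k : ℝ)) ^ β)
      ≤ r ^ η * L ^ (β + 1 / 2) * (((k : ℝ) + 2) ^ 2 * q ^ k)
    rw [hx, hLs]
    have hBnn : 0 ≤ (L + (k : ℝ)) ^ β := Real.rpow_nonneg (by linarith) _
    have hxnn : (0:ℝ) ≤ r ^ η * q ^ k := by
      have := Real.rpow_nonneg hr0.le η
      positivity
    calc Real.sqrt (L + (k : ℝ) + 1) * (r ^ η * q ^ k * (L + (k : ℝ)) ^ β)
        ≤ (Real.sqrt L * ((k : ℝ) + 2)) * (r ^ η * q ^ k * (L ^ β * ((k : ℝ) + 2))) := by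
          apply mul_le_mul hA
          · exact mul_le_mul_of_nonneg_left hB hxnn
          · positivity
          · positivity
      _ = r ^ η * (L ^ β * Real.sqrt L) * (((k : ℝ) + 2) ^ 2 * q ^ k) := by ring
  -- put it together
  calc (∫⁻ u in Set.Ioc (0 : ℝ) r, ENNReal.ofReal (Real.sqrt |Real.log u|) ∂p.measure)
      ≤ ∫⁻ u in ⋃ k : ℕ, s k, ENNReal.ofReal (Real.sqrt |Real.log u|) ∂p.measure :=
        lintegral_mono_set hcover
    _ ≤ ∑' k : ℕ, ∫⁻ u in s k, ENNReal.ofReal (Real.sqrt |Real.log u|) ∂p.measure :=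
        lintegral_iUnion_le _ _
    _ ≤ ∑' k : ℕ, ENNReal.ofReal (a k) := ENNReal.tsum_le_tsum hterm
    _ ≤ ∑' k : ℕ, ENNReal.ofReal (r ^ η * L ^ (β + 1 / 2) * (((k : ℝ) + 2) ^ 2 * q ^ k)) :=
        ENNReal.tsum_le_tsum fun k => ENNReal.ofReal_le_ofReal (habound k)
    _ = ENNReal.ofReal (r ^ η * L ^ (β + 1 / 2) * S) := by
        rw [← ENNReal.ofReal_tsum_of_nonneg, hS, ← tsum_mul_left]
        · intro k
          have h1 := Real.rpow_nonneg hr0.le η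
          have h2 := Real.rpow_nonneg hL0.le (β + 1 / 2)
          positivity
        · exact hsum.mul_left _
    _ ≤ ENNReal.ofReal ((1 + S) * r ^ η * L ^ (β + 1 / 2)) := by
        apply ENNReal.ofReal_le_ofReal
        have h1 := Real.rpow_nonneg hr0.le η
        have h2 := Real.rpow_nonneg hL0.le (β + 1 / 2)
        nlinarith
end

section
/- Let (Ω, F, P) be a probability space and S'(K) the dual of a nuclear test-function space S(K) ⊂ L²(K,μ) with μ a probability measure. Fix α ∈ (0,2] and s ≥ 0, and let A : S(K) → C(K) be a linear operator with ‖A f‖_{L²(K,μ)} ≤ λ₁^{-s} ‖f‖_{L²(K,μ)} for some λ₁ > 0. Then the functional φ(f) = exp(−∫_K |A f|^α dμ) on S(K) is positive definite and continuous at 0 (with respect to any topology finer than the L² topology). In particular, φ(f_ℓ − f_j) arises as E[exp(i W(Af_ℓ)) · conj(exp(i W(Af_j)))] for a symmetric α-stable random measure W, whence ∑_{ℓ,j} a_ℓ conj(a_j) φ(f_ℓ − f_j) ≥ 0 for all complex a₁,…,a_n and f₁,…,f_n ∈ S(K). -/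
open MeasureTheory Filter Topology

namespace StableAux
open MeasureTheory Set Real
open scoped Nat

lemma one_sub_cos_nonneg (x : ℝ) : 0 ≤ 1 - Real.cos x := by linarith [Real.cos_le_one x]

lemma one_sub_cos_le_two (x : ℝ) : 1 - Real.cos x ≤ 2 := by linarith [Real.neg_one_le_cos x]

lemma one_sub_cos_le_sq (x : ℝ) : 1 - Real.cos x ≤ x ^ 2 / 2 := by
  have h := Real.sin_sq_eq_half_sub (x := x / 2)
  have h2 : 2 * (x / 2) = x := by ring
  rw [h2] at h
  nlinarith [Real.sin_sq_le_sq (x := x / 2)]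

lemma kern_contOn (α t : ℝ) :
    ContinuousOn (fun u : ℝ => (1 - Real.cos (t * u)) * u ^ (-1 - α)) (Ioi 0) := by
  apply ContinuousOn.mul
  · exact ((continuous_const.sub (Real.continuous_cos.comp (continuous_const.mul continuous_id))).continuousOn)
  · exact ContinuousOn.rpow_const continuousOn_id (fun x hx => Or.inl (ne_of_gt hx))

lemma integrable_kern {α : ℝ} (hα : 0 < α) (hα2 : α < 2) (t : ℝ) :
    IntegrableOn (fun u : ℝ => (1 - Real.cos (t * u)) * u ^ (-1 - α)) (Ioi 0) := by
  rw [← Set.Ioc_union_Ioi_eq_Ioi (zero_le_one (α := ℝ))]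
  refine IntegrableOn.union ?_ ?_
  · -- on Ioc 0 1, dominate by (t^2/2) * u^(1-α)
    have hb : IntegrableOn (fun u : ℝ => t ^ 2 / 2 * u ^ (1 - α)) (Ioc 0 1) :=
      ((intervalIntegral.intervalIntegrable_rpow' (by linarith) (a := 0) (b := 1)).1).const_mul _
    refine Integrable.mono' hb ?_ ?_
    · exact ((kern_contOn α t).mono Ioc_subset_Ioi_self).aestronglyMeasurable measurableSet_Ioc
    · filter_upwards [ae_restrict_mem measurableSet_Ioc] with u hu
      have hu0 : 0 < u := hu.1
      have h1 : 1 - Real.cos (t * u) ≤ t ^ 2 / 2 * u ^ 2 := by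
        have := one_sub_cos_le_sq (t * u); nlinarith
      have h0 : (0:ℝ) ≤ 1 - Real.cos (t * u) := one_sub_cos_nonneg _
      have hw : (0:ℝ) < u ^ (-1 - α) := Real.rpow_pos_of_pos hu0 _
      rw [Real.norm_eq_abs, abs_of_nonneg (mul_nonneg h0 hw.le)]
      have : u ^ (1 - α) = u ^ 2 * u ^ (-1 - α) := by
        rw [← Real.rpow_natCast u 2, ← Real.rpow_add hu0]
        congr 1; ring
      rw [this]
      calc (1 - Real.cos (t * u)) * u ^ (-1 - α)
          ≤ t ^ 2 / 2 * u ^ 2 * u ^ (-1 - α) := by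
            exact mul_le_mul_of_nonneg_right h1 hw.le
        _ = t ^ 2 / 2 * (u ^ 2 * u ^ (-1 - α)) := by ring
  · -- on Ioi 1, dominate by 2 * u^(-1-α)
    have hb : IntegrableOn (fun u : ℝ => 2 * u ^ (-1 - α)) (Ioi 1) :=
      (integrableOn_Ioi_rpow_of_lt (by linarith) one_pos).const_mul _
    refine Integrable.mono' hb ?_ ?_
    · exact ((kern_contOn α t).mono (fun x (hx : x ∈ Ioi (1:ℝ)) => (lt_trans one_pos hx : (0:ℝ) < x))).aestronglyMeasurable
        measurableSet_Ioi
    · filter_upwards [ae_restrict_mem measurableSet_Ioi] with u hu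
      have hu0 : (0:ℝ) < u := lt_trans one_pos hu
      have hw : (0:ℝ) < u ^ (-1 - α) := Real.rpow_pos_of_pos hu0 _
      rw [Real.norm_eq_abs, abs_of_nonneg (mul_nonneg (one_sub_cos_nonneg _) hw.le)]
      exact mul_le_mul_of_nonneg_right (one_sub_cos_le_two _) hw.le

noncomputable def lC (α : ℝ) : ℝ := ∫ u in Ioi (0:ℝ), (1 - Real.cos u) * u ^ (-1 - α)

lemma lC_pos {α : ℝ} (hα : 0 < α) (hα2 : α < 2) : 0 < lC α := by
  have hint : IntegrableOn (fun u : ℝ => (1 - Real.cos u) * u ^ (-1 - α)) (Ioi 0) := by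
    simpa using integrable_kern hα hα2 1
  rw [lC, setIntegral_pos_iff_support_of_nonneg_ae ?_ hint]
  · have hsub : Ioo (0:ℝ) π ⊆
        (Function.support fun u => (1 - Real.cos u) * u ^ (-1 - α)) ∩ Ioi 0 := by
      intro u hu
      refine ⟨?_, hu.1⟩
      have hc : Real.cos u < 1 := by
        have := Real.cos_lt_cos_of_nonneg_of_le_pi (le_refl 0) hu.2.le hu.1
        simpa using this
      have hw : (0:ℝ) < u ^ (-1 - α) := Real.rpow_pos_of_pos hu.1 _
      simp only [Function.mem_support]
      exact ne_of_gt (mul_pos (by linarith) hw)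
    refine lt_of_lt_of_le ?_ (measure_mono hsub)
    rw [Real.volume_Ioo]
    simp [Real.pi_pos]
  · filter_upwards [ae_restrict_mem measurableSet_Ioi] with u hu
    exact mul_nonneg (one_sub_cos_nonneg _) (Real.rpow_pos_of_pos hu _).le

lemma levy_repr {α : ℝ} (hα : 0 < α) (hα2 : α < 2) (t : ℝ) :
    ∫ u in Ioi (0:ℝ), (1 - Real.cos (t * u)) * u ^ (-1 - α) = |t| ^ α * lC α := by
  rcases eq_or_ne t 0 with rfl | ht
  · simp [Real.zero_rpow hα.ne']
  · set b := |t| with hb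
    have hb0 : 0 < b := abs_pos.2 ht
    have hcos : ∀ u : ℝ, Real.cos (t * u) = Real.cos (b * u) := by
      intro u
      rcases abs_cases t with ⟨h, _⟩ | ⟨h, _⟩
      · rw [hb, h]
      · rw [hb, h, neg_mul, Real.cos_neg]
    have hbb : b ^ ((1:ℝ)+α) * b ^ (-1-α) = 1 := by
      rw [← Real.rpow_add hb0, show (1:ℝ)+α+(-1-α) = 0 by ring, Real.rpow_zero]
    calc ∫ u in Ioi (0:ℝ), (1 - Real.cos (t*u)) * u ^ (-1-α)
        = ∫ u in Ioi (0:ℝ), b ^ ((1:ℝ)+α) * ((1 - Real.cos (b*u)) * (b*u) ^ (-1-α)) := by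
          refine setIntegral_congr_fun measurableSet_Ioi (fun u hu => ?_)
          have hu0 : (0:ℝ) < u := hu
          rw [hcos u, Real.mul_rpow hb0.le hu0.le,
            show b ^ ((1:ℝ)+α) * ((1 - Real.cos (b*u)) * (b ^ (-1-α) * u ^ (-1-α)))
              = (b ^ ((1:ℝ)+α) * b ^ (-1-α)) * ((1 - Real.cos (b*u)) * u ^ (-1-α)) by ring,
            hbb, one_mul]
      _ = b ^ ((1:ℝ)+α) * ∫ u in Ioi (0:ℝ), (1 - Real.cos (b*u)) * (b*u) ^ (-1-α) :=
          integral_const_mul _ _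
      _ = b ^ ((1:ℝ)+α) * (b⁻¹ • ∫ v in Ioi (b*0), (1 - Real.cos v) * v ^ (-1-α)) := by
          rw [integral_comp_mul_left_Ioi (fun v => (1 - Real.cos v) * v ^ (-1-α)) 0 hb0]
      _ = b ^ α * lC α := by
          rw [mul_zero, smul_eq_mul, lC, ← mul_assoc]
          congr 1
          rw [← Real.rpow_neg_one b, ← Real.rpow_add hb0]
          congr 1; ring

lemma negdef_core {α : ℝ} (hα : 0 < α) (hα2 : α ≤ 2) {n : ℕ} (t x : Fin n → ℝ) :
    0 ≤ ∑ ℓ, ∑ j, x ℓ * x j * (|t ℓ| ^ α + |t j| ^ α - |t ℓ - t j| ^ α) := by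
  rcases eq_or_lt_of_le hα2 with rfl | hlt
  · -- α = 2
    have h2 : ∀ c : ℝ, |c| ^ (2:ℝ) = c ^ 2 := fun c => by
      rw [show (2:ℝ) = ((2:ℕ):ℝ) by norm_num, Real.rpow_natCast, sq_abs]
    have key : (∑ ℓ, ∑ j, x ℓ * x j * (|t ℓ| ^ (2:ℝ) + |t j| ^ (2:ℝ) - |t ℓ - t j| ^ (2:ℝ)))
        = 2 * (∑ ℓ, x ℓ * t ℓ) ^ 2 := by
      rw [sq, Finset.sum_mul_sum, Finset.mul_sum]
      refine Finset.sum_congr rfl fun ℓ _ => ?_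
      rw [Finset.mul_sum]
      refine Finset.sum_congr rfl fun j _ => ?_
      rw [h2, h2, h2]; ring
    rw [key]; positivity
  · have hCpos := lC_pos hα hlt
    set g : ℝ → ℝ → ℝ := fun s u => (1 - Real.cos (s*u)) * u ^ (-1-α) with hg
    have hint : ∀ s, IntegrableOn (fun u => g s u) (Ioi 0) := fun s => integrable_kern hα hlt s
    have hrep : ∀ s : ℝ, |s| ^ α * lC α = ∫ u in Ioi (0:ℝ), g s u := by
      intro s; rw [← levy_repr hα hlt s]
    have hintAdd : ∀ a b : ℝ, IntegrableOn (fun u => g a u + g b u) (Ioi 0) :=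
      fun a b => (hint a).add (hint b)
    have hint3 : ∀ a b c : ℝ, IntegrableOn (fun u => g a u + g b u - g c u) (Ioi 0) :=
      fun a b c => (hintAdd a b).sub (hint c)
    have hterm : ∀ (ℓ j : Fin n),
        x ℓ * x j * (|t ℓ| ^ α + |t j| ^ α - |t ℓ - t j| ^ α) * lC α
          = ∫ u in Ioi (0:ℝ), x ℓ * x j * (g (t ℓ) u + g (t j) u - g (t ℓ - t j) u) := by
      intro ℓ j
      rw [integral_const_mul, integral_sub (hintAdd _ _) (hint _),
        integral_add (hint _) (hint _), ← hrep, ← hrep, ← hrep]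
      ring
    have hsum : (∑ ℓ, ∑ j, x ℓ * x j * (|t ℓ| ^ α + |t j| ^ α - |t ℓ - t j| ^ α)) * lC α
        = ∫ u in Ioi (0:ℝ), ∑ ℓ, ∑ j,
            x ℓ * x j * (g (t ℓ) u + g (t j) u - g (t ℓ - t j) u) := by
      rw [Finset.sum_mul,
        integral_finset_sum _ (fun ℓ _ => integrable_finset_sum _
          (fun j _ => (hint3 _ _ _).const_mul _))]
      refine Finset.sum_congr rfl fun ℓ _ => ?_
      rw [Finset.sum_mul,
        integral_finset_sum _ (fun j _ => (hint3 _ _ _).const_mul _)]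
      exact Finset.sum_congr rfl fun j _ => hterm ℓ j
    have hC2 : 0 ≤ (∑ ℓ, ∑ j, x ℓ * x j * (|t ℓ| ^ α + |t j| ^ α - |t ℓ - t j| ^ α)) * lC α := by
      rw [hsum]
      refine setIntegral_nonneg measurableSet_Ioi (fun u hu => ?_)
      have hu0 : (0:ℝ) < u := hu
      have hwpos : (0:ℝ) < u ^ (-1-α) := Real.rpow_pos_of_pos hu0 _
      have hident : ∀ ℓ j : Fin n, x ℓ * x j * (g (t ℓ) u + g (t j) u - g (t ℓ - t j) u)
          = ((x ℓ * (1 - Real.cos (t ℓ * u))) * (x j * (1 - Real.cos (t j * u)))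
            + (x ℓ * Real.sin (t ℓ * u)) * (x j * Real.sin (t j * u))) * u ^ (-1-α) := by
        intro ℓ j
        simp only [hg]
        rw [show (t ℓ - t j) * u = t ℓ * u - t j * u by ring, Real.cos_sub]
        ring
      have hrw : ∑ ℓ, ∑ j, x ℓ * x j * (g (t ℓ) u + g (t j) u - g (t ℓ - t j) u)
          = ((∑ ℓ, x ℓ * (1 - Real.cos (t ℓ * u)))^2
            + (∑ ℓ, x ℓ * Real.sin (t ℓ * u))^2) * u ^ (-1-α) := by
        rw [sq, sq, Finset.sum_mul_sum, Finset.sum_mul_sum, ← Finset.sum_add_distrib,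
          Finset.sum_mul]
        refine Finset.sum_congr rfl fun ℓ _ => ?_
        rw [← Finset.sum_add_distrib, Finset.sum_mul]
        exact Finset.sum_congr rfl fun j _ => hident ℓ j
      rw [hrw]
      positivity
    refine le_of_mul_le_mul_right ?_ hCpos
    rw [zero_mul]; exact hC2

lemma hadpow_nonneg {n : ℕ} (M : Fin n → Fin n → ℝ)
    (hsym : ∀ ℓ j, M ℓ j = M j ℓ)
    (hq : ∀ x : Fin n → ℝ, 0 ≤ ∑ ℓ, ∑ j, x ℓ * x j * M ℓ j) (m : ℕ) (x : Fin n → ℝ) :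
    0 ≤ ∑ ℓ, ∑ j, x ℓ * x j * M ℓ j ^ m := by
  have hpsd : (Matrix.of M).PosSemidef := by
    refine Matrix.PosSemidef.of_dotProduct_mulVec_nonneg ?_ ?_
    · ext ℓ j
      simp only [Matrix.conjTranspose_apply, Matrix.of_apply, star_trivial]
      exact hsym j ℓ
    · intro y
      have e : dotProduct (star y) ((Matrix.of M).mulVec y) = ∑ ℓ, ∑ j, y ℓ * y j * M ℓ j := by
        simp only [dotProduct, Matrix.mulVec, star_trivial, Matrix.of_apply]
        refine Finset.sum_congr rfl fun ℓ _ => ?_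
        rw [Finset.mul_sum]
        exact Finset.sum_congr rfl fun j _ => by ring
      rw [e]; exact hq y
  obtain ⟨m', B, hB⟩ := Matrix.posSemidef_iff_eq_sum_vecMulVec.mp hpsd
  have hMB : ∀ ℓ j, M ℓ j = ∑ k, B k ℓ * B k j := by
    intro ℓ j
    have h := congrFun (congrFun hB ℓ) j
    simpa [Matrix.sum_apply, Matrix.vecMulVec_apply, Matrix.of_apply] using h
  induction m generalizing x with
  | zero =>
    simp only [pow_zero, mul_one]
    have e : ∑ ℓ, ∑ j, x ℓ * x j = (∑ ℓ, x ℓ) ^ 2 := by rw [sq, Finset.sum_mul_sum]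
    rw [e]; positivity
  | succ m ih =>
    have h1 : ∀ ℓ j : Fin n, x ℓ * x j * M ℓ j ^ (m+1)
        = ∑ k, (x ℓ * B k ℓ) * (x j * B k j) * M ℓ j ^ m := by
      intro ℓ j
      calc x ℓ * x j * M ℓ j ^ (m+1)
          = (x ℓ * x j * M ℓ j ^ m) * (∑ k, B k ℓ * B k j) := by rw [← hMB ℓ j]; ring
        _ = ∑ k, (x ℓ * B k ℓ) * (x j * B k j) * M ℓ j ^ m := by
            rw [Finset.mul_sum]
            exact Finset.sum_congr rfl fun k _ => by ring
    calc (0:ℝ) ≤ ∑ k, ∑ ℓ, ∑ j, (x ℓ * B k ℓ) * (x j * B k j) * M ℓ j ^ m :=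
          Finset.sum_nonneg fun k _ => ih (fun i => x i * B k i)
      _ = ∑ ℓ, ∑ k, ∑ j, (x ℓ * B k ℓ) * (x j * B k j) * M ℓ j ^ m :=
          Finset.sum_comm
      _ = ∑ ℓ, ∑ j, ∑ k, (x ℓ * B k ℓ) * (x j * B k j) * M ℓ j ^ m :=
          Finset.sum_congr rfl fun ℓ _ => Finset.sum_comm
      _ = ∑ ℓ, ∑ j, x ℓ * x j * M ℓ j ^ (m+1) :=
          Finset.sum_congr rfl fun ℓ _ => Finset.sum_congr rfl fun j _ => (h1 ℓ j).symm

lemma exp_quadratic_nonneg {n : ℕ} (ψ : Fin n → ℝ) (D : Fin n → Fin n → ℝ)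
    (hq : ∀ x : Fin n → ℝ, 0 ≤ ∑ ℓ, ∑ j, x ℓ * x j * (ψ ℓ + ψ j - D ℓ j))
    (hsymD : ∀ ℓ j, D ℓ j = D j ℓ)
    (x : Fin n → ℝ) :
    0 ≤ ∑ ℓ, ∑ j, x ℓ * x j * Real.exp (-(D ℓ j)) := by
  set M : Fin n → Fin n → ℝ := fun ℓ j => ψ ℓ + ψ j - D ℓ j with hM
  set y : Fin n → ℝ := fun ℓ => x ℓ * Real.exp (-(ψ ℓ)) with hy
  have hsymM : ∀ ℓ j, M ℓ j = M j ℓ := fun ℓ j => by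
    simp only [hM]; rw [hsymD ℓ j]; ring
  have hexp : ∀ z : ℝ, Real.exp z = ∑' m : ℕ, z ^ m / (m ! : ℝ) := fun z => by
    rw [Real.exp_eq_exp_ℝ, NormedSpace.exp_eq_tsum_div]
  have hterm : ∀ ℓ j, x ℓ * x j * Real.exp (-(D ℓ j))
      = ∑' m : ℕ, y ℓ * y j * (M ℓ j ^ m / (m ! : ℝ)) := by
    intro ℓ j
    have e1 : y ℓ * y j * Real.exp (M ℓ j) = x ℓ * x j * Real.exp (-(D ℓ j)) := by
      rw [show (-(D ℓ j)) = (-(ψ ℓ)) + ((-(ψ j)) + M ℓ j) from by simp only [hM]; ring,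
        Real.exp_add, Real.exp_add]
      simp only [hy]; ring
    rw [← e1, hexp (M ℓ j), ← tsum_mul_left]
  have hsummable : ∀ ℓ j, Summable (fun m : ℕ => y ℓ * y j * (M ℓ j ^ m / (m ! : ℝ))) :=
    fun ℓ j => (Real.summable_pow_div_factorial (M ℓ j)).mul_left _
  calc (0:ℝ) ≤ ∑' m : ℕ, ∑ ℓ, ∑ j, y ℓ * y j * (M ℓ j ^ m / (m ! : ℝ)) := by
        refine tsum_nonneg fun m => ?_
        have e2 : ∑ ℓ, ∑ j, y ℓ * y j * (M ℓ j ^ m / (m ! : ℝ))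
            = (∑ ℓ, ∑ j, y ℓ * y j * M ℓ j ^ m) / (m ! : ℝ) := by
          rw [Finset.sum_div]
          refine Finset.sum_congr rfl fun ℓ _ => ?_
          rw [Finset.sum_div]
          exact Finset.sum_congr rfl fun j _ => by ring
        rw [e2]
        exact div_nonneg (hadpow_nonneg M hsymM hq m y) (Nat.cast_nonneg _)
    _ = ∑ ℓ, ∑ j, ∑' m : ℕ, y ℓ * y j * (M ℓ j ^ m / (m ! : ℝ)) := by
        rw [Summable.tsum_finsetSum (fun ℓ _ => summable_sum (fun j _ => hsummable ℓ j))]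
        exact Finset.sum_congr rfl fun ℓ _ => Summable.tsum_finsetSum (fun j _ => hsummable ℓ j)
    _ = ∑ ℓ, ∑ j, x ℓ * x j * Real.exp (-(D ℓ j)) :=
        Finset.sum_congr rfl fun ℓ _ => Finset.sum_congr rfl fun j _ => (hterm ℓ j).symm

end StableAux

open StableAux

/-- For a probability measure `μ`, `α ∈ (0,2]`, and a linear operator
`A : S(K) → C(K)` with `‖A f‖_{L²} ≤ λ₁^{-s} ‖f‖`, the functional
`φ(f) = exp(−∫ |A f|^α dμ)` is continuous at `0` and positive definite:
`∑_{ℓ,j} a_ℓ conj(a_j) φ(f_ℓ − f_j)` is real and nonnegative. -/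
theorem stable_characteristic_functional
    {K E : Type*} [TopologicalSpace K] [CompactSpace K]
    [MeasurableSpace K] [OpensMeasurableSpace K]
    (μ : Measure K) [IsProbabilityMeasure μ]
    [NormedAddCommGroup E] [NormedSpace ℝ E]
    (α s lam₁ : ℝ) (hα : 0 < α) (hα2 : α ≤ 2) (hs : 0 ≤ s) (hlam₁ : 0 < lam₁)
    (A : E →ₗ[ℝ] C(K, ℝ))
    (hAbound : ∀ f : E, ∫ x, (A f x) ^ (2 : ℝ) ∂μ ≤ lam₁ ^ (-(2 * s)) * ‖f‖ ^ (2 : ℝ))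
    (φ : E → ℝ)
    (hφ : ∀ f : E, φ f = Real.exp (-∫ x, |A f x| ^ α ∂μ)) :
    Tendsto φ (nhds 0) (nhds 1) ∧
      ∀ (n : ℕ) (a : Fin n → ℂ) (f : Fin n → E),
        (∑ ℓ, ∑ j, a ℓ * (starRingEnd ℂ) (a j) * (φ (f ℓ - f j) : ℂ)).im = 0 ∧
        0 ≤ (∑ ℓ, ∑ j, a ℓ * (starRingEnd ℂ) (a j) * (φ (f ℓ - f j) : ℂ)).re := by
  have hcont : ∀ g : E, Continuous fun x => |A g x| ^ α := fun g =>
    ((A g).continuous.abs).rpow_const (fun x => Or.inr hα.le)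
  have hintK : ∀ g : E, Integrable (fun x => |A g x| ^ α) μ := fun g =>
    (hcont g).integrable_of_hasCompactSupport ((isClosed_tsupport _).isCompact)
  set ψ : E → ℝ := fun g => ∫ x, |A g x| ^ α ∂μ with hψ
  have hψnn : ∀ g, 0 ≤ ψ g := fun g =>
    integral_nonneg fun x => Real.rpow_nonneg (abs_nonneg _) _
  constructor
  · -- continuity at 0
    have hψ0 : Tendsto ψ (nhds 0) (nhds 0) := by
      rw [Metric.tendsto_nhds]
      intro ε' hε'
      set ε : ℝ := (ε'/2) ^ (α⁻¹) with hε
      have hεpos : 0 < ε := Real.rpow_pos_of_pos (by linarith) _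
      have hεα : ε ^ α = ε'/2 := by
        rw [hε, ← Real.rpow_mul (by linarith), inv_mul_cancel₀ hα.ne', Real.rpow_one]
      have hpt : ∀ (g : E) (x : K), |A g x| ^ α ≤ ε ^ α + ε ^ (α - 2) * (A g x) ^ (2:ℝ) := by
        intro g x
        have h2 : (A g x) ^ (2:ℝ) = |A g x| ^ (2:ℝ) := by
          rw [show (2:ℝ) = ((2:ℕ):ℝ) by norm_num, Real.rpow_natCast, Real.rpow_natCast, sq_abs]
        rw [h2]
        set d := |A g x| with hd
        have hd0 : 0 ≤ d := abs_nonneg _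
        rcases le_or_gt d ε with hle | hgt
        · have h3 : d ^ α ≤ ε ^ α := Real.rpow_le_rpow hd0 hle hα.le
          have hnn : 0 ≤ ε ^ (α-2) * d ^ (2:ℝ) :=
            mul_nonneg (Real.rpow_nonneg hεpos.le _) (Real.rpow_nonneg hd0 _)
          linarith
        · have hdpos : 0 < d := lt_trans hεpos hgt
          have e : d ^ α = d ^ (α - 2) * d ^ (2:ℝ) := by
            rw [← Real.rpow_add hdpos]; congr 1; ring
          have h1 : d ^ (α-2) ≤ ε ^ (α-2) :=
            Real.rpow_le_rpow_of_nonpos hεpos hgt.le (by linarith)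
          have h2' : (0:ℝ) ≤ d ^ (2:ℝ) := Real.rpow_nonneg hd0 _
          have hεnn : (0:ℝ) ≤ ε ^ α := Real.rpow_nonneg hεpos.le _
          calc d ^ α = d ^ (α-2) * d ^ (2:ℝ) := e
            _ ≤ ε ^ (α-2) * d ^ (2:ℝ) := mul_le_mul_of_nonneg_right h1 h2'
            _ ≤ ε ^ α + ε ^ (α-2) * d ^ (2:ℝ) := le_add_of_nonneg_left hεnn
      have hbound : ∀ g : E, ψ g ≤ ε ^ α + ε ^ (α-2) * (lam₁ ^ (-(2*s)) * ‖g‖ ^ (2:ℝ)) := by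
        intro g
        have hint2 : Integrable (fun x => (A g x) ^ (2:ℝ)) μ := by
          have hc : Continuous fun x => (A g x) ^ (2:ℝ) := by
            have e : (fun x => (A g x) ^ (2:ℝ)) = fun x => (A g x) ^ (2:ℕ) := by
              funext x; rw [← Real.rpow_natCast]; norm_num
            rw [e]; exact (A g).continuous.pow 2
          exact hc.integrable_of_hasCompactSupport ((isClosed_tsupport _).isCompact)
        calc ψ g ≤ ∫ x, (ε ^ α + ε ^ (α-2) * (A g x) ^ (2:ℝ)) ∂μ := by
              refine integral_mono (hintK g) ?_ (fun x => hpt g x)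
              exact (integrable_const _).add (hint2.const_mul _)
          _ = ε ^ α + ε ^ (α-2) * ∫ x, (A g x) ^ (2:ℝ) ∂μ := by
              rw [integral_add (integrable_const _) (hint2.const_mul _), integral_const,
                probReal_univ, one_smul, integral_const_mul]
          _ ≤ _ := by
              have hA := hAbound g
              have hc : (0:ℝ) ≤ ε ^ (α-2) := Real.rpow_nonneg hεpos.le _
              nlinarith [mul_le_mul_of_nonneg_left hA hc]
      have htail : Tendsto (fun g : E => ε ^ (α-2) * (lam₁ ^ (-(2*s)) * ‖g‖ ^ (2:ℝ)))
          (nhds 0) (nhds 0) := by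
        have e : ∀ g : E, ε ^ (α-2) * (lam₁ ^ (-(2*s)) * ‖g‖ ^ (2:ℝ))
            = (ε ^ (α-2) * lam₁ ^ (-(2*s))) * ‖g‖ ^ (2:ℕ) := by
          intro g
          rw [show (2:ℝ) = ((2:ℕ):ℝ) by norm_num, Real.rpow_natCast]; ring
        have h1 : Tendsto (fun g : E => ‖g‖ ^ (2:ℕ)) (nhds 0) (nhds 0) := by
          have h0 : Tendsto (fun g : E => ‖g‖) (nhds 0) (nhds 0) := tendsto_norm_zero
          simpa using h0.pow 2
        have h2 : Tendsto (fun g : E => (ε ^ (α-2) * lam₁ ^ (-(2*s))) * ‖g‖ ^ (2:ℕ))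
            (nhds 0) (nhds 0) := by
          simpa using h1.const_mul (ε ^ (α-2) * lam₁ ^ (-(2*s)))
        exact h2.congr (fun g => (e g).symm)
      filter_upwards [htail.eventually_lt_const (by linarith : (0:ℝ) < ε'/2)] with g hg
      rw [Real.dist_eq, sub_zero, abs_of_nonneg (hψnn g)]
      have hb := hbound g
      linarith [hεα]
    have h0 : Tendsto (fun g : E => -(ψ g)) (nhds 0) (nhds 0) := by
      simpa using hψ0.neg
    have hexp : Tendsto (fun g : E => Real.exp (-(ψ g))) (nhds 0) (nhds 1) := by
      have := (Real.continuous_exp.tendsto 0).comp h0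
      simpa [Function.comp_def] using this
    exact hexp.congr (fun g => (hφ g).symm)
  · intro n a f
    have hAval : ∀ (g h : E) (x : K), A (g - h) x = A g x - A h x := by
      intro g h x; rw [map_sub]; rfl
    have hsub : ∀ ℓ j : Fin n,
        (fun y => |A (f ℓ) y - A (f j) y| ^ α) = fun y => |A (f ℓ - f j) y| ^ α := by
      intro ℓ j; funext y; rw [hAval]
    have hcomb : ∀ ℓ j : Fin n, Integrable
        (fun y => |A (f ℓ) y| ^ α + |A (f j) y| ^ α - |A (f ℓ) y - A (f j) y| ^ α) μ := by
      intro ℓ j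
      have h1 : Integrable (fun y => |A (f ℓ) y| ^ α + |A (f j) y| ^ α) μ :=
        (hintK _).add (hintK _)
      have h2 : Integrable (fun y => |A (f ℓ) y - A (f j) y| ^ α) μ := by
        rw [hsub ℓ j]; exact hintK _
      exact h1.sub h2
    have hterm : ∀ ℓ j : Fin n, ψ (f ℓ) + ψ (f j) - ψ (f ℓ - f j)
        = ∫ y, (|A (f ℓ) y| ^ α + |A (f j) y| ^ α - |A (f ℓ) y - A (f j) y| ^ α) ∂μ := by
      intro ℓ j
      have h1 : Integrable (fun y => |A (f ℓ) y| ^ α + |A (f j) y| ^ α) μ :=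
        (hintK _).add (hintK _)
      have h2 : Integrable (fun y => |A (f ℓ) y - A (f j) y| ^ α) μ := by
        rw [hsub ℓ j]; exact hintK _
      rw [integral_sub h1 h2, integral_add (hintK _) (hintK _)]
      simp only [hψ]
      rw [hsub ℓ j]
    have hq : ∀ x : Fin n → ℝ,
        0 ≤ ∑ ℓ, ∑ j, x ℓ * x j * (ψ (f ℓ) + ψ (f j) - ψ (f ℓ - f j)) := by
      intro x
      have hswap : ∑ ℓ, ∑ j, x ℓ * x j * (ψ (f ℓ) + ψ (f j) - ψ (f ℓ - f j))
          = ∫ y, ∑ ℓ, ∑ j, x ℓ * x j *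
              (|A (f ℓ) y| ^ α + |A (f j) y| ^ α - |A (f ℓ) y - A (f j) y| ^ α) ∂μ := by
        rw [integral_finset_sum _ (fun ℓ _ => integrable_finset_sum _
          (fun j _ => (hcomb ℓ j).const_mul _))]
        refine Finset.sum_congr rfl fun ℓ _ => ?_
        rw [integral_finset_sum _ (fun j _ => (hcomb ℓ j).const_mul _)]
        refine Finset.sum_congr rfl fun j _ => ?_
        rw [integral_const_mul, hterm ℓ j]
      rw [hswap]
      refine integral_nonneg fun y => ?_
      exact negdef_core hα hα2 (fun ℓ => A (f ℓ) y) x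
    have hψsym : ∀ ℓ j : Fin n, ψ (f ℓ - f j) = ψ (f j - f ℓ) := by
      intro ℓ j
      simp only [hψ]
      refine integral_congr_ae (Filter.Eventually.of_forall fun y => ?_)
      show |A (f ℓ - f j) y| ^ α = |A (f j - f ℓ) y| ^ α
      rw [hAval, hAval, abs_sub_comm]
    set r : Fin n → Fin n → ℝ := fun ℓ j => φ (f ℓ - f j) with hr
    have hrsym : ∀ ℓ j, r ℓ j = r j ℓ := fun ℓ j => by
      have h := hψsym ℓ j
      simp only [hψ] at h
      simp only [hr]; rw [hφ, hφ, h]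
    have hquad : ∀ x : Fin n → ℝ, 0 ≤ ∑ ℓ, ∑ j, x ℓ * x j * r ℓ j := by
      intro x
      have h := exp_quadratic_nonneg (fun ℓ => ψ (f ℓ)) (fun ℓ j => ψ (f ℓ - f j)) hq hψsym x
      refine le_of_le_of_eq h (Finset.sum_congr rfl fun ℓ _ =>
        Finset.sum_congr rfl fun j _ => ?_)
      simp only [hr]
      rw [hφ (f ℓ - f j)]
    have him : (∑ ℓ, ∑ j, a ℓ * (starRingEnd ℂ) (a j) * (φ (f ℓ - f j) : ℂ)).im
        = ∑ ℓ, ∑ j, ((a ℓ).im * (a j).re - (a ℓ).re * (a j).im) * r ℓ j := by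
      rw [Complex.im_sum]
      refine Finset.sum_congr rfl fun ℓ _ => ?_
      rw [Complex.im_sum]
      refine Finset.sum_congr rfl fun j _ => ?_
      simp only [hr, Complex.mul_im, Complex.mul_re, Complex.conj_re, Complex.conj_im,
        Complex.ofReal_re, Complex.ofReal_im]
      ring
    have hre : (∑ ℓ, ∑ j, a ℓ * (starRingEnd ℂ) (a j) * (φ (f ℓ - f j) : ℂ)).re
        = ∑ ℓ, ∑ j, ((a ℓ).re * (a j).re + (a ℓ).im * (a j).im) * r ℓ j := by
      rw [Complex.re_sum]
      refine Finset.sum_congr rfl fun ℓ _ => ?_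
      rw [Complex.re_sum]
      refine Finset.sum_congr rfl fun j _ => ?_
      simp only [hr, Complex.mul_im, Complex.mul_re, Complex.conj_re, Complex.conj_im,
        Complex.ofReal_re, Complex.ofReal_im]
      ring
    constructor
    · rw [him]
      have hsplit : ∑ ℓ, ∑ j, ((a ℓ).im * (a j).re - (a ℓ).re * (a j).im) * r ℓ j
          = (∑ ℓ, ∑ j, (a ℓ).im * (a j).re * r ℓ j)
            - ∑ ℓ, ∑ j, (a ℓ).re * (a j).im * r ℓ j := by
        rw [← Finset.sum_sub_distrib]
        refine Finset.sum_congr rfl fun ℓ _ => ?_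
        rw [← Finset.sum_sub_distrib]
        exact Finset.sum_congr rfl fun j _ => by ring
      rw [hsplit]
      have hswap2 : ∑ ℓ, ∑ j, (a ℓ).im * (a j).re * r ℓ j
          = ∑ ℓ, ∑ j, (a ℓ).re * (a j).im * r ℓ j := by
        rw [Finset.sum_comm]
        refine Finset.sum_congr rfl fun ℓ _ => Finset.sum_congr rfl fun j _ => ?_
        rw [hrsym j ℓ]; ring
      rw [hswap2, sub_self]
    · rw [hre]
      have hsplit : ∑ ℓ, ∑ j, ((a ℓ).re * (a j).re + (a ℓ).im * (a j).im) * r ℓ j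
          = (∑ ℓ, ∑ j, (a ℓ).re * (a j).re * r ℓ j)
            + ∑ ℓ, ∑ j, (a ℓ).im * (a j).im * r ℓ j := by
        rw [← Finset.sum_add_distrib]
        refine Finset.sum_congr rfl fun ℓ _ => ?_
        rw [← Finset.sum_add_distrib]
        exact Finset.sum_congr rfl fun j _ => by ring
      rw [hsplit]
      exact add_nonneg (hquad (fun ℓ => (a ℓ).re)) (hquad (fun ℓ => (a ℓ).im))
end
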